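/- arXiv:2306.11940 — 10 statements merged into one kernel-verified Lean document; each statement's English description precedes it below -/
import Mathlib

section
/- Let G and H be finite abelian groups and let d ≥ 1 be an integer. Then there is an isomorphism of abelian groups Hmg^d(G,H) ≅ Hmg^d(G, ℚ/ℤ) ⊗ H (tensor product over ℤ). -/
open scoped DirectSum

noncomputable section

/-- `ℚ/ℤ`, the quotient of the rationals by the integers. -/
abbrev QZ : Type := AddCircle (1 : ℚ)

/-- The group of homogeneous functions of degree `d` from `G` to `H`, i.e. functions `f` with
`f (n • x) = n ^ d • f x` for every `x : G` and every integer `n` coprime to the order of `x`,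
as an additive subgroup of `G → H` under pointwise addition. -/
def Hmg (d : ℕ) (G H : Type*) [AddCommGroup G] [AddCommGroup H] : AddSubgroup (G → H) where
  carrier := {f | ∀ (x : G) (n : ℤ), IsCoprime n (addOrderOf x : ℤ) → f (n • x) = n ^ d • f x}
  zero_mem' := by intro x n _; simp
  add_mem' := by
    intro f g hf hg x n h
    simp only [Pi.add_apply, hf x n h, hg x n h, smul_add]
  neg_mem' := by
    intro f hf x n h
    simp only [Pi.neg_apply, hf x n h, smul_neg]

open AddSubgroup TensorProduct

set_option linter.unusedSectionVars false
set_option linter.unusedVariables false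



theorem zsmul_addOrderOf_eq_zero {G : Type*} [AddGroup G] (x : G) :
    (addOrderOf x : ℤ) • x = 0 :=
  addOrderOf_dvd_iff_zsmul_eq_zero.mp dvd_rfl

-- coprime smul generates same subgroup
theorem zmultiples_zsmul_coprime {G : Type*} [AddCommGroup G] (n : ℤ) (x : G)
    (h : IsCoprime n (addOrderOf x : ℤ)) : zmultiples (n • x) = zmultiples x := by
  apply le_antisymm
  · exact (zmultiples_le).2 (mem_zmultiples_iff.2 ⟨n, rfl⟩)
  · refine (zmultiples_le).2 (mem_zmultiples_iff.2 ?_)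
    obtain ⟨a, b, hab⟩ := h
    refine ⟨a, ?_⟩
    calc a • n • x = (a * n) • x := (mul_smul a n x).symm
    _ = (a * n) • x + (b * (addOrderOf x : ℤ)) • x := by rw [mul_smul b, zsmul_addOrderOf_eq_zero, smul_zero, add_zero]
    _ = (a * n + b * (addOrderOf x : ℤ)) • x := (add_smul _ _ x).symm
    _ = x := by rw [hab, one_smul]

theorem exists_coprime_of_zmultiples_eq {G : Type*} [AddCommGroup G] {x y : G}
    (h : zmultiples x = zmultiples y) :
    ∃ n : ℤ, IsCoprime n (addOrderOf x : ℤ) ∧ y = n • x := by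
  have hy : y ∈ zmultiples x := h ▸ mem_zmultiples y
  have hx : x ∈ zmultiples y := h.symm ▸ mem_zmultiples x
  obtain ⟨k, hk⟩ := mem_zmultiples_iff.1 hy
  obtain ⟨l, hl⟩ := mem_zmultiples_iff.1 hx
  refine ⟨k, ?_, hk.symm⟩
  have : (k * l - 1) • x = 0 := by
    rw [sub_smul, one_smul, mul_comm, mul_smul, hk, hl, sub_self]
  obtain ⟨c, hc⟩ := addOrderOf_dvd_iff_zsmul_eq_zero.2 this
  exact ⟨l, -c, by linarith⟩

theorem addOrderOf_eq_of_zmultiples_eq {G : Type*} [AddCommGroup G] {x y : G}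
    (h : zmultiples x = zmultiples y) : addOrderOf x = addOrderOf y := by
  rw [← Nat.card_zmultiples, ← Nat.card_zmultiples, h]



section setup
variable (G : Type*) [AddCommGroup G]

/-- Setoid: two elements are equivalent iff they generate the same cyclic subgroup. -/
def cycSetoid : Setoid G :=
  ⟨fun x y => zmultiples x = zmultiples y,
   ⟨fun _ => rfl, fun h => h.symm, fun h1 h2 => h1.trans h2⟩⟩

/-- Index type: cyclic subgroups (as classes of generators). -/
def CS : Type _ := Quotient (cycSetoid G)

variable {G}

def CS.rep (s : CS G) : G := Quotient.out s

def CS.m (s : CS G) : ℕ := addOrderOf s.rep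

/-- The set of relation integers attached to a class. -/
def RSet (d : ℕ) (s : CS G) : Set ℤ :=
  {z | ∃ n n' : ℤ, IsCoprime n (s.m : ℤ) ∧ IsCoprime n' (s.m : ℤ) ∧
    (s.m : ℤ) ∣ n - n' ∧ z = n ^ d - n' ^ d}

def ESub (d : ℕ) (s : CS G) : Ideal ℤ := Ideal.span (RSet d s)

def eOf (d : ℕ) (s : CS G) : ℕ := (Submodule.IsPrincipal.generator (ESub d s)).natAbs

theorem eOf_dvd_of_mem {d : ℕ} {s : CS G} {z : ℤ} (hz : z ∈ RSet d s) :
    (eOf d s : ℤ) ∣ z := by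
  rw [eOf, Int.natAbs_dvd]
  exact (Submodule.IsPrincipal.mem_iff_generator_dvd _).1 (Ideal.subset_span hz)

theorem eOf_zsmul_eq_zero {d : ℕ} {s : CS G} {H : Type*} [AddCommGroup H] {h : H}
    (hh : ∀ z ∈ RSet d s, z • h = 0) : (eOf d s : ℤ) • h = 0 := by
  have hall : ∀ w ∈ ESub d s, w • h = 0 := by
    intro w hw
    induction hw using Submodule.span_induction with
    | mem z hz => exact hh z hz
    | zero => exact zero_smul ℤ h
    | add a b _ _ ha hb => rw [add_smul, ha, hb, add_zero]
    | smul c a _ ha => rw [smul_eq_mul, mul_smul, ha, smul_zero]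
  have hgen : Submodule.IsPrincipal.generator (ESub d s) • h = 0 :=
    hall _ (Submodule.IsPrincipal.generator_mem (ESub d s))
  rcases Int.natAbs_eq (Submodule.IsPrincipal.generator (ESub d s)) with he | he
  · rw [eOf, ← he]; exact hgen
  · have h2 : ((Submodule.IsPrincipal.generator (ESub d s)).natAbs : ℤ)
        = -(Submodule.IsPrincipal.generator (ESub d s)) := by omega
    rw [eOf, h2, neg_smul, hgen, neg_zero]

variable [Finite G]

theorem CS.m_pos (s : CS G) : 0 < s.m := addOrderOf_pos _

theorem eOf_pos {d : ℕ} (hd : 1 ≤ d) (s : CS G) : 0 < eOf d s := by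
  have hm : (1 : ℤ) ≤ (s.m : ℤ) := by exact_mod_cast s.m_pos
  have hz : ((1 + s.m : ℤ) ^ d - 1 ^ d) ∈ RSet d s := by
    refine ⟨1 + s.m, 1, ?_, isCoprime_one_left, ⟨1, by ring⟩, rfl⟩
    simpa using (isCoprime_one_left (x := (s.m : ℤ))).add_mul_right_left 1
  have hne : ((1 + s.m : ℤ) ^ d - 1 ^ d) ≠ 0 := by
    have h2 : (1 : ℤ) < (1 + s.m) ^ d :=
      one_lt_pow₀ (by linarith) (by omega)
    simp only [one_pow]; omega
  rcases Nat.eq_zero_or_pos (eOf d s) with h0 | h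
  · exfalso; apply hne
    have := eOf_dvd_of_mem hz
    rw [h0] at this
    exact_mod_cast (zero_dvd_iff).1 (by exact_mod_cast this)
  · exact h

/-- The `e`-torsion subgroup. -/
def torKer (e : ℕ) (H : Type*) [AddCommGroup H] : AddSubgroup H :=
  (zsmulAddGroupHom (e : ℤ) : H →+ H).ker

theorem mem_torKer {e : ℕ} {H : Type*} [AddCommGroup H] {h : H} :
    h ∈ torKer e H ↔ (e : ℤ) • h = 0 := Iff.rfl

/-- The subgroup of elements killed by all relations of class `s`. -/
def Tor (d : ℕ) (s : CS G) (H : Type*) [AddCommGroup H] : AddSubgroup H where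
  carrier := {h | ∀ z ∈ RSet d s, z • h = 0}
  zero_mem' := fun z _ => smul_zero z
  add_mem' := by intro a b ha hb z hz; rw [smul_add, ha z hz, hb z hz, add_zero]
  neg_mem' := by intro a ha z hz; rw [smul_neg, ha z hz, neg_zero]

theorem Tor_eq_torKer (d : ℕ) (s : CS G) (H : Type*) [AddCommGroup H] :
    Tor d s H = torKer (eOf d s) H := by
  ext h
  constructor
  · intro hh; exact eOf_zsmul_eq_zero hh
  · intro hh z hz
    have hh' : (eOf d s : ℤ) • h = 0 := hh
    obtain ⟨c, hc⟩ := eOf_dvd_of_mem hz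
    rw [hc, mul_comm, mul_smul, hh', smul_zero]

end setup


/- assume chunk1+2 compiled; re-declare minimal needed pieces by importing file? just inline for test -/


section iso1
variable {G : Type*} [AddCommGroup G]

def clsOf (y : G) : CS G := Quotient.mk (cycSetoid G) y

theorem rep_rel (y : G) : zmultiples ((clsOf y).rep) = zmultiples y := Quotient.mk_out (s := cycSetoid G) y

theorem clsOf_rep (s : CS G) : clsOf s.rep = s := Quotient.out_eq s

theorem coefSpec (y : G) :
    ∃ n : ℤ, IsCoprime n (((clsOf y).m : ℕ) : ℤ) ∧ y = n • (clsOf y).rep :=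
  exists_coprime_of_zmultiples_eq (rep_rel y)

def coef (y : G) : ℤ := (coefSpec y).choose

theorem coef_coprime (y : G) : IsCoprime (coef y) (((clsOf y).m : ℕ) : ℤ) :=
  (coefSpec y).choose_spec.1

theorem coef_smul (y : G) : y = coef y • (clsOf y).rep :=
  (coefSpec y).choose_spec.2

theorem addOrderOf_eq_m (y : G) : addOrderOf y = (clsOf y).m :=
  (addOrderOf_eq_of_zmultiples_eq (rep_rel y)).symm

theorem dvd_sub_of_smul_rep_eq {s : CS G} {a b : ℤ} (h : a • s.rep = b • s.rep) :
    (s.m : ℤ) ∣ a - b := by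
  rw [CS.m, addOrderOf_dvd_iff_zsmul_eq_zero, sub_smul, h, sub_self]

variable (d : ℕ) (H : Type*) [AddCommGroup H]

/-- Evaluation at representatives. -/
def evalHom : Hmg d G H →+ (∀ s : CS G, Tor d s H) where
  toFun f := fun s => ⟨(f : G → H) s.rep, by
    rintro z ⟨n, n', hn, hn', hdvd, rfl⟩
    have hx : n • s.rep = n' • s.rep := by
      have : (n - n') • s.rep = 0 := by
        rw [← addOrderOf_dvd_iff_zsmul_eq_zero]; exact hdvd
      exact sub_eq_zero.mp (by rw [← sub_smul]; exact this)
    have h1 := f.2 s.rep n hn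
    have h2 := f.2 s.rep n' hn'
    rw [sub_smul, ← h1, ← h2, hx, sub_self]⟩
  map_zero' := by ext s; rfl
  map_add' f g := by ext s; rfl

theorem evalHom_bijective : Function.Bijective (evalHom (G := G) d H) := by
  constructor
  · rw [injective_iff_map_eq_zero]
    intro f hf
    ext y
    have h0 : (f : G → H) (clsOf y).rep = 0 := by
      have := congrFun hf (clsOf y)
      exact Subtype.ext_iff.1 this
    have := f.2 (clsOf y).rep (coef y) (coef_coprime y)
    rw [← coef_smul y] at this
    simp only [this, h0, smul_zero]
    rfl
  · intro t
    set f : G → H := fun y => (coef y) ^ d • (t (clsOf y) : H) with hfdef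
    have hf : f ∈ Hmg d G H := by
      intro y k hk
      set s := clsOf y with hs
      have hks : clsOf (k • y) = s := by
        refine Quotient.sound ?_
        exact zmultiples_zsmul_coprime k y hk
      have hkm : IsCoprime k ((s.m : ℕ) : ℤ) := by rwa [← addOrderOf_eq_m y]
      -- k • y = (k * coef y) • s.rep
      have hky : k • y = (k * coef y) • s.rep := by
        rw [mul_smul]; rw [← coef_smul y]
      have hc1 : k • y = coef (k • y) • s.rep := by
        conv_lhs => rw [coef_smul (k • y)]
        rw [hks]
      have hdvd : (s.m : ℤ) ∣ coef (k • y) - k * coef y :=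
        dvd_sub_of_smul_rep_eq (by rw [← hc1, hky])
      have hc1cop : IsCoprime (coef (k • y)) ((s.m : ℕ) : ℤ) := by
        have := coef_coprime (k • y); rwa [hks] at this
      have hc2cop : IsCoprime (coef y) ((s.m : ℕ) : ℤ) := coef_coprime y
      have hz : (coef (k • y)) ^ d - (k * coef y) ^ d ∈ RSet d s :=
        ⟨_, _, hc1cop, hkm.mul_left hc2cop, hdvd, rfl⟩
      have h0 := (t s).2 _ hz
      rw [sub_smul] at h0
      calc f (k • y) = coef (k • y) ^ d • (t (clsOf (k • y)) : H) := rfl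
        _ = coef (k • y) ^ d • (t s : H) := by rw [hks]
        _ = (k * coef y) ^ d • (t s : H) := sub_eq_zero.mp h0
        _ = k ^ d • f y := by rw [mul_pow, mul_smul]
    refine ⟨⟨f, hf⟩, ?_⟩
    funext s
    apply Subtype.ext
    show f s.rep = (t s : H)
    have hcs : clsOf s.rep = s := clsOf_rep s
    have hc : s.rep = coef s.rep • s.rep := by
      conv_lhs => rw [coef_smul s.rep]; rw [hcs]
    have hdvd : (s.m : ℤ) ∣ coef s.rep - 1 :=
      dvd_sub_of_smul_rep_eq (by rw [← hc, one_smul])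
    have hcop : IsCoprime (coef s.rep) ((s.m : ℕ) : ℤ) := by
      have := coef_coprime s.rep; rwa [hcs] at this
    have hz : (coef s.rep) ^ d - 1 ^ d ∈ RSet d s :=
      ⟨_, _, hcop, isCoprime_one_left, hdvd, rfl⟩
    have h0 := (t s).2 _ hz
    rw [sub_smul] at h0
    have : (coef s.rep) ^ d • (t s : H) = (1:ℤ) ^ d • (t s : H) := sub_eq_zero.mp h0
    show (coef s.rep) ^ d • (t (clsOf s.rep) : H) = (t s : H)
    rw [hcs, this, one_pow, one_smul]

end iso1



/-- Torsion transports along AddEquiv. -/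
def torCongr {e : ℕ} {A B : Type*} [AddCommGroup A] [AddCommGroup B] (φ : A ≃+ B) :
    torKer e A ≃+ torKer e B where
  toFun a := ⟨φ a, by
    rw [mem_torKer, ← map_zsmul φ, (mem_torKer).1 a.2, map_zero]⟩
  invFun b := ⟨φ.symm b, by
    rw [mem_torKer, ← map_zsmul φ.symm, (mem_torKer).1 b.2, map_zero]⟩
  left_inv a := by ext; simp
  right_inv b := by ext; simp
  map_add' a b := by ext; simp

/-- Torsion of a product. -/
def torPi (e : ℕ) {ι : Type*} (A : ι → Type*) [∀ i, AddCommGroup (A i)] :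
    torKer e (∀ i, A i) ≃+ ∀ i, torKer e (A i) where
  toFun f i := ⟨(f : ∀ i, A i) i, congrFun ((mem_torKer).1 f.2) i⟩
  invFun g := ⟨fun i => (g i : A i), funext fun i => (mem_torKer).1 (g i).2⟩
  left_inv f := by ext; rfl
  right_inv g := by ext; rfl
  map_add' f g := by ext; rfl

theorem card_torKer_zmod (n e : ℕ) (hn : n ≠ 0) (he : e ≠ 0) :
    Nat.card (torKer e (ZMod n)) = n.gcd e := by
  have hcard : Nat.card (ZMod n) = n := Nat.card_zmod n
  have hrange : ((zsmulAddGroupHom (e : ℤ) : ZMod n →+ ZMod n)).range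
      = zmultiples ((e : ℕ) : ZMod n) := by
    ext x
    simp only [AddMonoidHom.mem_range, mem_zmultiples_iff]
    constructor
    · rintro ⟨y, rfl⟩
      obtain ⟨k, rfl⟩ := ZMod.intCast_surjective y
      refine ⟨k, ?_⟩
      show k • ((e : ℕ) : ZMod n) = zsmulAddGroupHom (e : ℤ) (k : ZMod n)
      show _ = (e : ℤ) • (k : ZMod n)
      rw [zsmul_eq_mul, zsmul_eq_mul]
      push_cast
      ring
    · rintro ⟨k, rfl⟩
      refine ⟨(k : ZMod n), ?_⟩
      show (e : ℤ) • (k : ZMod n) = _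
      rw [zsmul_eq_mul, zsmul_eq_mul]
      push_cast
      ring
  have h1 : Nat.card (ZMod n) =
      Nat.card (ZMod n ⧸ (torKer e (ZMod n))) * Nat.card (torKer e (ZMod n)) :=
    AddSubgroup.card_eq_card_quotient_mul_card_addSubgroup _
  have h2 : Nat.card (ZMod n ⧸ (torKer e (ZMod n))) = n / n.gcd e := by
    have := QuotientAddGroup.quotientKerEquivRange (zsmulAddGroupHom (e : ℤ) : ZMod n →+ ZMod n)
    rw [show torKer e (ZMod n) = (zsmulAddGroupHom (e : ℤ) : ZMod n →+ ZMod n).ker from rfl]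
    rw [Nat.card_congr this.toEquiv, hrange, Nat.card_zmultiples, ZMod.addOrderOf_coe e hn]
  rw [hcard, h2] at h1
  have hg : n.gcd e ∣ n := Nat.gcd_dvd_left n e
  have hgpos : 0 < n.gcd e := Nat.gcd_pos_of_pos_left e (Nat.pos_of_ne_zero hn)
  have hq : n / n.gcd e ≠ 0 := by
    have := Nat.div_pos (Nat.le_of_dvd (Nat.pos_of_ne_zero hn) hg) hgpos
    omega
  have : n / n.gcd e * n.gcd e = n := Nat.div_mul_cancel hg
  have hfin := Nat.eq_of_mul_eq_mul_left (Nat.pos_of_ne_zero hq)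
    (show n / n.gcd e * Nat.card (torKer e (ZMod n)) = n / n.gcd e * (n.gcd e) by omega)
  exact hfin

instance torKer_isAddCyclic (n e : ℕ) : IsAddCyclic (torKer e (ZMod n)) := by
  have : IsAddCyclic (ZMod n) := inferInstance
  infer_instance

/-- `torKer e (ZMod n)` is iso to `ZMod (gcd)`. -/
def torKerZModEquiv (n e : ℕ) (hn : n ≠ 0) (he : e ≠ 0) :
    ZMod (n.gcd e) ≃+ torKer e (ZMod n) := by
  have h := zmodAddCyclicAddEquiv (G := torKer e (ZMod n)) inferInstance
  rw [card_torKer_zmod n e hn he] at h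
  exact h



section tz
variable (e n : ℕ)

abbrev TZ := TensorProduct ℤ (ZMod e) (ZMod n)

def tzGen : TZ e n := (1 : ZMod e) ⊗ₜ[ℤ] (1 : ZMod n)

theorem tz_surj : ∀ x : TZ e n, ∃ k : ℤ, k • tzGen e n = x := by
  intro x
  induction x using TensorProduct.induction_on with
  | zero => exact ⟨0, by simp⟩
  | tmul a b =>
    obtain ⟨ka, rfl⟩ := ZMod.intCast_surjective a
    obtain ⟨kb, rfl⟩ := ZMod.intCast_surjective b
    refine ⟨ka * kb, ?_⟩
    show (ka * kb) • ((1 : ZMod e) ⊗ₜ[ℤ] (1 : ZMod n)) = _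
    have h1 : ((ka : ℤ) : ZMod e) = (ka : ℤ) • (1 : ZMod e) := by simp
    have h2 : ((kb : ℤ) : ZMod n) = (kb : ℤ) • (1 : ZMod n) := by simp
    rw [h1, h2, TensorProduct.smul_tmul', TensorProduct.tmul_smul,
      TensorProduct.smul_tmul', smul_smul, mul_comm kb ka]
  | add x y hx hy =>
    obtain ⟨kx, hkx⟩ := hx
    obtain ⟨ky, hky⟩ := hy
    exact ⟨kx + ky, by rw [add_smul, hkx, hky]⟩

instance tz_isAddCyclic : IsAddCyclic (TZ e n) :=
  ⟨tzGen e n, fun x => tz_surj e n x⟩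

theorem tz_gcd_smul : ((n.gcd e : ℕ) : ℤ) • tzGen e n = 0 := by
  have hbez := Nat.gcd_eq_gcd_ab n e
  have h1 : ((n : ℤ)) • tzGen e n = 0 := by
    show ((n : ℤ)) • ((1 : ZMod e) ⊗ₜ[ℤ] (1 : ZMod n)) = 0
    rw [← TensorProduct.tmul_smul]
    have : ((n : ℤ)) • (1 : ZMod n) = 0 := by simp
    rw [this, tmul_zero]
  have h2 : ((e : ℤ)) • tzGen e n = 0 := by
    show ((e : ℤ)) • ((1 : ZMod e) ⊗ₜ[ℤ] (1 : ZMod n)) = 0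
    rw [TensorProduct.smul_tmul']
    have : ((e : ℤ)) • (1 : ZMod e) = 0 := by simp
    rw [this, zero_tmul]
  calc ((n.gcd e : ℕ) : ℤ) • tzGen e n
      = ((n : ℤ) * Nat.gcdA n e + (e : ℤ) * Nat.gcdB n e) • tzGen e n := by rw [← hbez]
    _ = Nat.gcdA n e • ((n : ℤ) • tzGen e n) + Nat.gcdB n e • ((e : ℤ) • tzGen e n) := by
        rw [add_smul, mul_comm ((n:ℤ)), mul_comm ((e:ℤ)), mul_smul, mul_smul]
    _ = 0 := by rw [h1, h2, smul_zero, smul_zero, add_zero]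

variable (hn : n ≠ 0) (he : e ≠ 0)
include hn he

theorem tz_card : Nat.card (TZ e n) = n.gcd e := by
  have hg : n.gcd e ≠ 0 := Nat.gcd_ne_zero_left hn
  -- card = addOrderOf gen
  have htop : zmultiples (tzGen e n) = ⊤ := by
    rw [eq_top_iff]
    intro x _
    obtain ⟨k, hk⟩ := tz_surj e n x
    exact mem_zmultiples_iff.2 ⟨k, hk⟩
  have hcard : Nat.card (TZ e n) = addOrderOf (tzGen e n) := by
    rw [← Nat.card_zmultiples, htop]
    exact (Nat.card_congr AddSubgroup.topEquiv.toEquiv).symm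
  -- addOrderOf gen ∣ gcd
  have hdvd : addOrderOf (tzGen e n) ∣ n.gcd e := by
    have := addOrderOf_dvd_iff_zsmul_eq_zero.2 (tz_gcd_smul e n)
    exact_mod_cast this
  have hpos : 0 < addOrderOf (tzGen e n) := by
    rw [addOrderOf_pos_iff]
    refine (isOfFinAddOrder_iff_nsmul_eq_zero).2 ⟨n.gcd e, Nat.pos_of_ne_zero hg, ?_⟩
    rw [← natCast_zsmul]
    exact tz_gcd_smul e n
  -- surjection onto ZMod gcd
  have hgdvd_e : n.gcd e ∣ e := Nat.gcd_dvd_right n e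
  have hgdvd_n : n.gcd e ∣ n := Nat.gcd_dvd_left n e
  let c1 : ZMod e →+* ZMod (n.gcd e) := ZMod.castHom hgdvd_e _
  let c2 : ZMod n →+* ZMod (n.gcd e) := ZMod.castHom hgdvd_n _
  let bil : ZMod e →ₗ[ℤ] ZMod n →ₗ[ℤ] ZMod (n.gcd e) := LinearMap.mk₂ ℤ
    (fun a b => c1 a * c2 b)
    (fun a a' b => by rw [map_add, add_mul])
    (fun z a b => by rw [map_zsmul, smul_mul_assoc])
    (fun a b b' => by rw [map_add, mul_add])
    (fun z a b => by rw [map_zsmul, mul_smul_comm])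
  let φ : TZ e n →ₗ[ℤ] ZMod (n.gcd e) := TensorProduct.lift bil
  have hφsurj : Function.Surjective φ := by
    intro y
    obtain ⟨k, rfl⟩ := ZMod.intCast_surjective y
    refine ⟨k • tzGen e n, ?_⟩
    rw [map_zsmul]
    have h1 : φ (tzGen e n) = 1 := by
      show bil 1 1 = 1
      show c1 1 * c2 1 = 1
      rw [map_one, map_one, mul_one]
    rw [h1]
    simp
  haveI : NeZero (n.gcd e) := ⟨hg⟩
  have hfin : Finite (TZ e n) := by
    apply Nat.finite_of_card_ne_zero
    rw [hcard]; omega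
  have hdvd2 : n.gcd e ∣ Nat.card (TZ e n) := by
    have := card_dvd_of_surjective φ.toAddMonoidHom hφsurj
    rwa [Nat.card_zmod] at this
  rw [hcard] at hdvd2 ⊢
  exact Nat.dvd_antisymm hdvd hdvd2

def tzEquivZMod : TZ e n ≃+ ZMod (n.gcd e) := by
  have h := zmodAddCyclicAddEquiv (G := TZ e n) inferInstance
  rw [tz_card e n hn he] at h
  exact h.symm

end tz




instance : Fact ((0:ℚ) < 1) := ⟨zero_lt_one⟩

theorem qz_torKer_eq (e : ℕ) (he : e ≠ 0) :
    torKer e QZ = zmultiples (((e : ℚ)⁻¹ : ℚ) : QZ) := by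
  have hepos : 0 < e := Nat.pos_of_ne_zero he
  have hord : addOrderOf (((e : ℚ)⁻¹ : ℚ) : QZ) = e := by
    have := AddCircle.addOrderOf_period_div (p := (1 : ℚ)) hepos
    simpa [one_div] using this
  ext q
  rw [mem_torKer]
  constructor
  · intro hq
    have hdvd : addOrderOf q ∣ e := by
      have := addOrderOf_dvd_iff_zsmul_eq_zero.2 hq
      exact_mod_cast this
    have hqpos : 0 < addOrderOf q := by
      rcases Nat.eq_zero_or_pos (addOrderOf q) with h0 | h
      · rw [h0] at hdvd; omega
      · exact h
    obtain ⟨m, hlt, hgcd, hu⟩ := (AddCircle.addOrderOf_eq_pos_iff hqpos).1 rfl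
    set n := addOrderOf q with hn
    obtain ⟨c, hc⟩ := hdvd
    refine mem_zmultiples_iff.2 ⟨(m * c : ℕ), ?_⟩
    rw [← hu]
    have hnne : ((n:ℚ)) ≠ 0 := by exact_mod_cast hqpos.ne'
    have hene : ((e:ℚ)) ≠ 0 := by exact_mod_cast he
    have key : ((m * c : ℕ) : ℤ) • (((e : ℚ)⁻¹ : ℚ) : QZ) = ((((m * c : ℕ) : ℚ) * (e : ℚ)⁻¹ : ℚ) : QZ) := by
      rw [← AddCircle.coe_zsmul]
      norm_num
    rw [key]
    congr 1
    have hcnat : c ≠ 0 := by rintro rfl; omega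
    have hcne : ((c:ℚ)) ≠ 0 := by exact_mod_cast hcnat
    have hc' : (e:ℚ) = (n:ℚ) * c := by rw [hc]; push_cast; ring
    rw [mul_one, hc']
    field_simp
    push_cast
    ring
  · intro hq
    obtain ⟨k, rfl⟩ := mem_zmultiples_iff.1 hq
    have : (e : ℤ) • (((e : ℚ)⁻¹ : ℚ) : QZ) = 0 := by
      rw [← addOrderOf_dvd_iff_zsmul_eq_zero, hord]
    rw [smul_comm]
    rw [this, smul_zero]

def qzTorEquiv (e : ℕ) (he : e ≠ 0) : ZMod e ≃+ torKer e QZ := by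
  have hepos : 0 < e := Nat.pos_of_ne_zero he
  have hord : addOrderOf (((e : ℚ)⁻¹ : ℚ) : QZ) = e := by
    have := AddCircle.addOrderOf_period_div (p := (1 : ℚ)) hepos
    simpa [one_div] using this
  have hcyc : IsAddCyclic (torKer e QZ) := by
    rw [qz_torKer_eq e he]
    constructor
    refine ⟨⟨(((e : ℚ)⁻¹ : ℚ) : QZ), mem_zmultiples _⟩, ?_⟩
    rintro ⟨y, hy⟩
    obtain ⟨k, hk⟩ := mem_zmultiples_iff.1 hy
    exact ⟨k, Subtype.ext (by simpa using hk)⟩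
  have hcard : Nat.card (torKer e QZ) = e := by
    rw [qz_torKer_eq e he, Nat.card_zmultiples, hord]
  have h := zmodAddCyclicAddEquiv hcyc
  rw [hcard] at h
  exact h


theorem tensor_tor_equiv (e : ℕ) (he : e ≠ 0) (H : Type*) [AddCommGroup H] [Finite H] :
    Nonempty (TensorProduct ℤ (ZMod e) H ≃+ torKer e H) := by
  classical
  obtain ⟨ι, fι, p, hp, kk, ⟨ψ⟩⟩ := AddCommGroup.equiv_directSum_zmod_of_finite H
  have hn : ∀ i, p i ^ kk i ≠ 0 := fun i => pow_ne_zero _ (hp i).pos.ne'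
  refine ⟨?_⟩
  exact
    (TensorProduct.congr (LinearEquiv.refl ℤ (ZMod e)) ψ.toIntLinearEquiv).toAddEquiv.trans <|
    (TensorProduct.directSumRight ℤ ℤ (ZMod e) (fun i => ZMod (p i ^ kk i))).toAddEquiv.trans <|
    (DirectSum.linearEquivFunOnFintype ℤ ι
      (fun i => TensorProduct ℤ (ZMod e) (ZMod (p i ^ kk i)))).toAddEquiv.trans <|
    (AddEquiv.piCongrRight (fun i =>
      (tzEquivZMod e (p i ^ kk i) (hn i) he).trans
        (torKerZModEquiv (p i ^ kk i) e (hn i) he))).trans <|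
    (torPi e (fun i => ZMod (p i ^ kk i))).symm.trans <|
    (torCongr ((DirectSum.linearEquivFunOnFintype ℤ ι
      (fun i => ZMod (p i ^ kk i))).toAddEquiv.symm)).trans <|
    (torCongr ψ.symm)

theorem stmt1 (G H : Type*) [AddCommGroup G] [Finite G] [AddCommGroup H] [Finite H]
    (d : ℕ) (hd : 1 ≤ d) :
    Nonempty ((Hmg d G H) ≃+ TensorProduct ℤ (Hmg d G QZ) H) := by
  classical
  haveI : Finite (CS G) := Quotient.finite _
  haveI : Fintype (CS G) := Fintype.ofFinite _
  have hepos : ∀ s : CS G, eOf d s ≠ 0 := fun s => (eOf_pos hd s).ne'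
  let E1 : Hmg d G H ≃+ (∀ s : CS G, Tor d s H) :=
    AddEquiv.ofBijective _ (evalHom_bijective (G := G) d H)
  let E2 : (∀ s : CS G, Tor d s H) ≃+ (∀ s : CS G, torKer (eOf d s) H) :=
    AddEquiv.piCongrRight fun s => AddEquiv.addSubgroupCongr (Tor_eq_torKer d s H)
  let E3 : (∀ s : CS G, torKer (eOf d s) H) ≃+
      (∀ s : CS G, TensorProduct ℤ (ZMod (eOf d s)) H) :=
    AddEquiv.piCongrRight fun s =>
      (Classical.choice (tensor_tor_equiv (eOf d s) (hepos s) H)).symm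
  let E4 : (⨁ s : CS G, TensorProduct ℤ (ZMod (eOf d s)) H) ≃+
      (∀ s : CS G, TensorProduct ℤ (ZMod (eOf d s)) H) :=
    (DirectSum.linearEquivFunOnFintype ℤ (CS G)
      (fun s => TensorProduct ℤ (ZMod (eOf d s)) H)).toAddEquiv
  let E5 : TensorProduct ℤ (⨁ s : CS G, ZMod (eOf d s)) H ≃+
      (⨁ s : CS G, TensorProduct ℤ (ZMod (eOf d s)) H) :=
    (TensorProduct.directSumLeft ℤ ℤ (fun s : CS G => ZMod (eOf d s)) H).toAddEquiv
  let Θ : (⨁ s : CS G, ZMod (eOf d s)) ≃+ Hmg d G QZ :=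
    (DirectSum.linearEquivFunOnFintype ℤ (CS G) (fun s => ZMod (eOf d s))).toAddEquiv.trans <|
    (AddEquiv.piCongrRight fun s : CS G =>
      (qzTorEquiv (eOf d s) (hepos s)).trans
        (AddEquiv.addSubgroupCongr (Tor_eq_torKer d s QZ).symm)).trans <|
    (AddEquiv.ofBijective _ (evalHom_bijective (G := G) d QZ)).symm
  let E6 : TensorProduct ℤ (⨁ s : CS G, ZMod (eOf d s)) H ≃+ TensorProduct ℤ (Hmg d G QZ) H :=
    (TensorProduct.congr Θ.toIntLinearEquiv (LinearEquiv.refl ℤ H)).toAddEquiv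
  exact ⟨E1.trans (E2.trans (E3.trans (E4.symm.trans (E5.symm.trans E6))))⟩

end
end

section
/- Let G be a finite abelian group. Then G[0] is a free abelian group of rank equal to the number of cyclic subgroups of G. -/
open scoped DirectSum

noncomputable section

/-- The subgroup of relations `[n • x] - n ^ d • [x]` (for `n` coprime to the order of `x`)
defining `G[d]`. -/
def hrel (d : ℕ) (G : Type*) [AddCommGroup G] : AddSubgroup (FreeAbelianGroup G) :=
  AddSubgroup.closure
    {z | ∃ (x : G) (n : ℤ), IsCoprime n (addOrderOf x : ℤ) ∧
      z = FreeAbelianGroup.of (n • x) - n ^ d • FreeAbelianGroup.of x}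

/-- `G[d]`, the quotient of the free abelian group on (the underlying set of) `G` by the
subgroup generated by the elements `[n • x] - n ^ d • [x]` for `n` coprime to the order of `x`. -/
abbrev GBr (d : ℕ) (G : Type*) [AddCommGroup G] : Type _ :=
  FreeAbelianGroup G ⧸ hrel d G

/-- The canonical map `G → G[d]`, `x ↦ [x]`. -/
def brk (d : ℕ) {G : Type*} [AddCommGroup G] (x : G) : GBr d G :=
  QuotientAddGroup.mk (FreeAbelianGroup.of x)

section aux

variable {G : Type*} [AddCommGroup G] [Finite G]

lemma zmultiples_isAddCyclic (x : G) : IsAddCyclic (AddSubgroup.zmultiples x) := by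
  refine ⟨⟨x, AddSubgroup.mem_zmultiples x⟩, ?_⟩
  rintro ⟨y, hy⟩
  obtain ⟨k, hk⟩ := AddSubgroup.mem_zmultiples_iff.mp hy
  exact ⟨k, Subtype.ext hk⟩

/-- The class of `zmultiples x` as a cyclic subgroup. -/
def cyc (x : G) : {C : AddSubgroup G // IsAddCyclic C} :=
  ⟨AddSubgroup.zmultiples x, zmultiples_isAddCyclic x⟩

lemma zmultiples_smul_eq (x : G) (n : ℤ) (h : IsCoprime n (addOrderOf x : ℤ)) :
    AddSubgroup.zmultiples (n • x) = AddSubgroup.zmultiples x := by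
  refine le_antisymm ?_ ?_
  · rw [AddSubgroup.zmultiples_le]
    exact AddSubgroup.zsmul_mem _ (AddSubgroup.mem_zmultiples x) n
  · rw [AddSubgroup.zmultiples_le, AddSubgroup.mem_zmultiples_iff]
    obtain ⟨a, b, hab⟩ := h
    refine ⟨a, ?_⟩
    have h0 : (addOrderOf x : ℤ) • x = 0 := by
      rw [addOrderOf_dvd_iff_zsmul_eq_zero.mp dvd_rfl]
    calc a • n • x = (a * n) • x := (mul_smul a n x).symm
      _ = (a * n) • x + (b * (addOrderOf x : ℤ)) • x := by
          rw [mul_smul b, h0, smul_zero, add_zero]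
      _ = ((a * n) + b * (addOrderOf x : ℤ)) • x := (add_smul _ _ _).symm
      _ = (1 : ℤ) • x := by rw [hab]
      _ = x := one_smul _ _

lemma cyc_smul (x : G) (n : ℤ) (h : IsCoprime n (addOrderOf x : ℤ)) :
    cyc (n • x) = cyc x :=
  Subtype.ext (zmultiples_smul_eq x n h)

/-- A chosen generator of a cyclic subgroup. -/
def cgen (C : {C : AddSubgroup G // IsAddCyclic C}) : G :=
  (C.2.exists_zsmul_surjective.choose : G)

lemma cyc_cgen (C : {C : AddSubgroup G // IsAddCyclic C}) : cyc (cgen C) = C := by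
  have hs := C.2.exists_zsmul_surjective.choose_spec
  apply Subtype.ext
  show AddSubgroup.zmultiples (cgen C) = C.1
  refine le_antisymm ?_ ?_
  · rw [AddSubgroup.zmultiples_le]
    exact (C.2.exists_zsmul_surjective.choose).2
  · intro y hy
    obtain ⟨k, hk⟩ := hs ⟨y, hy⟩
    rw [AddSubgroup.mem_zmultiples_iff]
    exact ⟨k, congrArg Subtype.val hk⟩

lemma brk_eq_of_zmultiples_eq {x y : G}
    (h : AddSubgroup.zmultiples y = AddSubgroup.zmultiples x) :
    brk 0 y = brk 0 x := by
  -- `y = m • x` and `x = a • y`, so `(a*m - 1) • x = 0` giving coprimality of `m`.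
  obtain ⟨m, hm⟩ := AddSubgroup.mem_zmultiples_iff.mp
    (h ▸ AddSubgroup.mem_zmultiples y)
  obtain ⟨a, ha⟩ := AddSubgroup.mem_zmultiples_iff.mp
    (h ▸ AddSubgroup.mem_zmultiples x : x ∈ AddSubgroup.zmultiples y)
  have hz : (a * m - 1) • x = 0 := by
    rw [sub_smul, mul_smul, hm, ha, one_smul, sub_self]
  obtain ⟨b, hb⟩ := addOrderOf_dvd_iff_zsmul_eq_zero.mpr hz
  have hcop : IsCoprime m (addOrderOf x : ℤ) := ⟨a, -b, by linarith [hb]⟩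
  have hmem : FreeAbelianGroup.of (m • x) - FreeAbelianGroup.of x ∈ hrel 0 G := by
    apply AddSubgroup.subset_closure
    exact ⟨x, m, hcop, by rw [pow_zero, one_smul]⟩
  rw [hm] at hmem
  refine (QuotientAddGroup.eq).mpr ?_
  rw [neg_add_eq_sub]
  simpa using (neg_mem hmem)

/-- The map `G[0] →+ FreeAbelianGroup {cyclic subgroups}`. -/
def toFree : GBr 0 G →+ FreeAbelianGroup {C : AddSubgroup G // IsAddCyclic C} :=
  QuotientAddGroup.lift _ (FreeAbelianGroup.lift (fun x => FreeAbelianGroup.of (cyc x)))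
    (by
      rw [hrel, AddSubgroup.closure_le]
      rintro z ⟨x, n, hn, rfl⟩
      simp only [SetLike.mem_coe, AddMonoidHom.mem_ker, map_sub, map_zsmul,
        FreeAbelianGroup.lift_apply_of, pow_zero, one_smul]
      rw [cyc_smul x n hn, sub_self])

/-- The map `FreeAbelianGroup {cyclic subgroups} →+ G[0]`. -/
def ofFree : FreeAbelianGroup {C : AddSubgroup G // IsAddCyclic C} →+ GBr 0 G :=
  FreeAbelianGroup.lift (fun C => brk 0 (cgen C))

lemma ofFree_comp_toFree :
    (ofFree (G := G)).comp toFree = AddMonoidHom.id _ := by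
  apply QuotientAddGroup.addMonoidHom_ext
  apply FreeAbelianGroup.lift_ext -- hom ext on FreeAbelianGroup
  intro x
  show ofFree (toFree (brk 0 x)) = brk 0 x
  have h1 : toFree (brk 0 x) = FreeAbelianGroup.of (cyc x) := by
    simp [toFree, brk, QuotientAddGroup.lift_mk, FreeAbelianGroup.lift_apply_of]
  rw [h1]
  have h2 : ofFree (FreeAbelianGroup.of (cyc x)) = brk 0 (cgen (cyc x)) :=
    FreeAbelianGroup.lift_apply_of _ _
  rw [h2]
  apply brk_eq_of_zmultiples_eq
  have := cyc_cgen (cyc x)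
  have : (cyc (cgen (cyc x))).1 = (cyc x).1 := by rw [this]
  exact this

lemma toFree_comp_ofFree :
    (toFree (G := G)).comp ofFree = AddMonoidHom.id _ := by
  apply FreeAbelianGroup.lift_ext
  intro C
  show toFree (ofFree (FreeAbelianGroup.of C)) = FreeAbelianGroup.of C
  rw [show ofFree (FreeAbelianGroup.of C) = brk 0 (cgen C) from FreeAbelianGroup.lift_apply_of _ _]
  have : toFree (brk 0 (cgen C)) = FreeAbelianGroup.of (cyc (cgen C)) := by
    simp [toFree, brk, QuotientAddGroup.lift_mk, FreeAbelianGroup.lift_apply_of]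
  rw [this, cyc_cgen C]

end aux

theorem stmt2 (G : Type*) [AddCommGroup G] [Finite G] :
    Nonempty (GBr 0 G ≃+ (Fin (Nat.card {C : AddSubgroup G // IsAddCyclic C}) → ℤ)) := by
  set C := {C : AddSubgroup G // IsAddCyclic C}
  have hne : Nonempty C := ⟨⟨⊥, inferInstance⟩⟩
  have hfin : Finite C := inferInstance
  have e1 : GBr 0 G ≃+ FreeAbelianGroup C :=
    AddMonoidHom.toAddEquiv toFree ofFree ofFree_comp_toFree toFree_comp_ofFree
  have e2 : FreeAbelianGroup C ≃+ (C →₀ ℤ) := FreeAbelianGroup.equivFinsupp C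
  have e3 : (C →₀ ℤ) ≃+ (C → ℤ) := Finsupp.addEquivFunOnFinite
  have e4 : (C → ℤ) ≃+ (Fin (Nat.card C) → ℤ) :=
    AddEquiv.arrowCongr (Nat.equivFinOfCardPos (Nat.card_ne_zero.mpr ⟨hne, hfin⟩))
      (AddEquiv.refl ℤ)
  exact ⟨((e1.trans e2).trans e3).trans e4⟩

end
end

section
/- Let G be a finite abelian group and d ≥ 1 an integer. Then there is an isomorphism of abelian groups G[d] ≅ ⊕_C ℤ/o_d(|C|), where the direct sum runs over all cyclic subgroups C of G and |C| denotes the order of C. -/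
open scoped DirectSum

noncomputable section

/-- `o_d(k)`: the gcd, taken as a nonnegative integer, of the set
`{u ^ d - 1 | u ≡ 1 (mod k)}`, realized as the nonnegative generator of the ideal of `ℤ`
spanned by this set. -/
def oo (d k : ℕ) : ℕ :=
  (Submodule.IsPrincipal.generator
    (Ideal.span {z : ℤ | ∃ u : ℤ, (k : ℤ) ∣ (u - 1) ∧ z = u ^ d - 1})).natAbs

namespace Stmt3

/-! ### Arithmetic facts about `oo` -/

lemma oo_dvd (d : ℕ) {k : ℕ} {u : ℤ} (h : (k : ℤ) ∣ u - 1) : (oo d k : ℤ) ∣ u ^ d - 1 := by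
  have hmem : u ^ d - 1 ∈ Ideal.span {z : ℤ | ∃ u : ℤ, (k : ℤ) ∣ (u - 1) ∧ z = u ^ d - 1} :=
    Ideal.subset_span ⟨u, h, rfl⟩
  rw [Submodule.IsPrincipal.mem_iff_generator_dvd] at hmem
  exact Int.natAbs_dvd.2 hmem

lemma prime_dvd_of_dvd_oo {d : ℕ} (hd : 1 ≤ d) {k p : ℕ} (hp : p.Prime)
    (hpo : p ∣ oo d k) : p ∣ k := by
  by_contra hpk
  have hcop : IsCoprime (p : ℤ) (k : ℤ) :=
    Nat.isCoprime_iff_coprime.2 ((Nat.Prime.coprime_iff_not_dvd hp).2 hpk)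
  obtain ⟨a, b, hab⟩ := hcop
  set w : ℤ := a * p with hw
  have hk1 : (k : ℤ) ∣ w - 1 := ⟨-b, by linarith⟩
  have h1 : (oo d k : ℤ) ∣ w ^ d - 1 := oo_dvd d hk1
  have hpw : (p : ℤ) ∣ w := Dvd.intro_left a rfl
  have hpwd : (p : ℤ) ∣ w ^ d := dvd_pow hpw (by omega)
  have hpo' : (p : ℤ) ∣ (oo d k : ℤ) := Int.natCast_dvd_natCast.2 hpo
  have hp1 : (p : ℤ) ∣ 1 := by
    have := dvd_sub hpwd (hpo'.trans h1)
    simpa using this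
  have : p ∣ 1 := by exact_mod_cast hp1
  exact hp.ne_one (Nat.dvd_one.mp this)

lemma coprime_oo {d : ℕ} (hd : 1 ≤ d) {k : ℕ} {n : ℤ} (h : IsCoprime n (k : ℤ)) :
    IsCoprime n (oo d k : ℤ) := by
  rw [Int.isCoprime_iff_gcd_eq_one] at h ⊢
  by_contra hg
  obtain ⟨p, hp, hpd⟩ := Nat.exists_prime_and_dvd hg
  have hpd' : p ∣ Nat.gcd n.natAbs (oo d k) := by
    simpa [Int.gcd] using hpd
  have h1 : p ∣ n.natAbs := hpd'.trans (Nat.gcd_dvd_left _ _)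
  have h2 : p ∣ oo d k := by
    have := hpd'.trans (Nat.gcd_dvd_right _ _)
    simpa using this
  have h3 : p ∣ k := prime_dvd_of_dvd_oo hd hp h2
  have : p ∣ Int.gcd n (k : ℤ) := by
    rw [Int.gcd]
    exact Nat.dvd_gcd h1 (by simpa using h3)
  rw [h] at this
  exact hp.ne_one (Nat.dvd_one.mp this)

lemma pow_congr {d : ℕ} (hd : 1 ≤ d) {k : ℕ} {u v : ℤ} (hu : IsCoprime u (k : ℤ))
    (huv : (k : ℤ) ∣ u - v) : (oo d k : ℤ) ∣ u ^ d - v ^ d := by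
  obtain ⟨w, t, hwt⟩ := hu
  have hwu : (k : ℤ) ∣ w * u - 1 := ⟨-t, by linarith⟩
  have hwv : (k : ℤ) ∣ w * v - 1 := by
    have : w * v - 1 = (w * u - 1) - w * (u - v) := by ring
    rw [this]
    exact dvd_sub hwu (huv.mul_left w)
  have h1 : (oo d k : ℤ) ∣ (w * u) ^ d - 1 := oo_dvd d hwu
  have h2 : (oo d k : ℤ) ∣ (w * v) ^ d - 1 := oo_dvd d hwv
  have h3 : (oo d k : ℤ) ∣ (u ^ d - v ^ d) * w ^ d := by
    have : (u ^ d - v ^ d) * w ^ d = ((w * u) ^ d - 1) - ((w * v) ^ d - 1) := by ring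
    rw [this]; exact dvd_sub h1 h2
  have hwk : IsCoprime w (k : ℤ) := ⟨u, t, by linarith⟩
  have hwo : IsCoprime (oo d k : ℤ) (w ^ d) := ((coprime_oo hd hwk).pow_left).symm
  exact hwo.dvd_of_dvd_mul_right h3

/-! ### Generators of cyclic subgroups -/

variable {G : Type*} [AddCommGroup G]

lemma isAddCyclic_zmultiples (x : G) : IsAddCyclic (AddSubgroup.zmultiples x) := by
  refine ⟨⟨x, AddSubgroup.mem_zmultiples x⟩, fun y => ?_⟩
  obtain ⟨n, hn⟩ := AddSubgroup.mem_zmultiples_iff.1 y.2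
  exact AddSubgroup.mem_zmultiples_iff.2 ⟨n, Subtype.ext (by simpa using hn)⟩

def idx (x : G) : {C : AddSubgroup G // IsAddCyclic C} :=
  ⟨AddSubgroup.zmultiples x, isAddCyclic_zmultiples x⟩

def gen (C : {C : AddSubgroup G // IsAddCyclic C}) : G :=
  ((C.2.exists_generator).choose : C.1)

lemma gen_mem (C : {C : AddSubgroup G // IsAddCyclic C}) : gen C ∈ C.1 :=
  ((C.2.exists_generator).choose : C.1).2

lemma zmultiples_gen (C : {C : AddSubgroup G // IsAddCyclic C}) :
    AddSubgroup.zmultiples (gen C) = C.1 := by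
  apply le_antisymm (AddSubgroup.zmultiples_le.2 (gen_mem C))
  intro y hy
  obtain ⟨n, hn⟩ := AddSubgroup.mem_zmultiples_iff.1 ((C.2.exists_generator).choose_spec ⟨y, hy⟩)
  refine AddSubgroup.mem_zmultiples_iff.2 ⟨n, ?_⟩
  have := congrArg Subtype.val hn
  simpa [gen] using this

lemma addOrderOf_gen (C : {C : AddSubgroup G // IsAddCyclic C}) :
    addOrderOf (gen C) = Nat.card C.1 := by
  rw [← Nat.card_zmultiples, zmultiples_gen]

lemma card_idx (x : G) : Nat.card (idx x).1 = addOrderOf x := by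
  rw [idx, Nat.card_zmultiples]

def dlog (x : G) : ℤ :=
  (AddSubgroup.mem_zmultiples_iff.1
    (by rw [zmultiples_gen (idx x)]; exact AddSubgroup.mem_zmultiples x :
      x ∈ AddSubgroup.zmultiples (gen (idx x)))).choose

lemma dlog_spec (x : G) : dlog x • gen (idx x) = x :=
  (AddSubgroup.mem_zmultiples_iff.1
    (by rw [zmultiples_gen (idx x)]; exact AddSubgroup.mem_zmultiples x :
      x ∈ AddSubgroup.zmultiples (gen (idx x)))).choose_spec

lemma isCoprime_dlog (x : G) : IsCoprime (dlog x) (Nat.card (idx x).1 : ℤ) := by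
  have hg : gen (idx x) ∈ AddSubgroup.zmultiples x := gen_mem (idx x)
  obtain ⟨m, hm⟩ := AddSubgroup.mem_zmultiples_iff.1 hg
  have h1 : (m * dlog x - 1) • gen (idx x) = 0 := by
    have : (m * dlog x) • gen (idx x) = gen (idx x) := by
      rw [mul_smul, dlog_spec x, hm]
    rw [sub_smul, this, one_smul, sub_self]
  have h2 : (addOrderOf (gen (idx x)) : ℤ) ∣ m * dlog x - 1 :=
    addOrderOf_dvd_iff_zsmul_eq_zero.2 h1
  obtain ⟨t, ht⟩ := h2
  rw [addOrderOf_gen] at ht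
  exact ⟨m, -t, by linarith⟩

lemma zmultiples_zsmul_eq {x : G} {n : ℤ} (h : IsCoprime n (addOrderOf x : ℤ)) :
    AddSubgroup.zmultiples (n • x) = AddSubgroup.zmultiples x := by
  apply le_antisymm
  · exact AddSubgroup.zmultiples_le.2 (AddSubgroup.mem_zmultiples_iff.2 ⟨n, rfl⟩)
  · refine AddSubgroup.zmultiples_le.2 (AddSubgroup.mem_zmultiples_iff.2 ?_)
    obtain ⟨a, b, hab⟩ := h
    refine ⟨a, ?_⟩
    have hx : (addOrderOf x : ℤ) • x = 0 := addOrderOf_dvd_iff_zsmul_eq_zero.1 dvd_rfl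
    calc a • n • x = (a * n) • x := (mul_smul a n x).symm
      _ = (1 - b * (addOrderOf x : ℤ)) • x := by
          rw [show a * n = 1 - b * (addOrderOf x : ℤ) by linarith]
      _ = x := by rw [sub_smul, one_smul, mul_smul, hx, smul_zero, sub_zero]

lemma idx_zsmul_eq {x : G} {n : ℤ} (h : IsCoprime n (addOrderOf x : ℤ)) :
    idx (n • x) = idx x := Subtype.ext (zmultiples_zsmul_eq h)

end Stmt3

/-! ### The maps -/

namespace Stmt3

abbrev bfam (d : ℕ) (G : Type*) [AddCommGroup G] :
    {C : AddSubgroup G // IsAddCyclic C} → Type _ :=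
  fun C => ZMod (oo d (Nat.card C.1))

variable {G : Type*} [AddCommGroup G]

noncomputable instance (G : Type*) [AddCommGroup G] :
    DecidableEq {C : AddSubgroup G // IsAddCyclic C} := Classical.decEq _

def phi0 (d : ℕ) (x : G) : ⨁ C, bfam d G C :=
  DirectSum.of (bfam d G) (idx x) ((dlog x ^ d : ℤ) : ZMod (oo d (Nat.card (idx x).1)))

lemma of_intCast_eq (d : ℕ) {i j : {C : AddSubgroup G // IsAddCyclic C}} (h : i = j) (b : ℤ) :
    DirectSum.of (bfam d G) i ((b : ℤ) : ZMod (oo d (Nat.card i.1))) =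
      DirectSum.of (bfam d G) j ((b : ℤ) : ZMod (oo d (Nat.card j.1))) := by
  subst h; rfl

lemma phi0_rel {d : ℕ} (hd : 1 ≤ d) {x : G} {n : ℤ} (h : IsCoprime n (addOrderOf x : ℤ)) :
    phi0 d (n • x) = n ^ d • phi0 d x := by
  have hidx : idx (n • x) = idx x := idx_zsmul_eq h
  set k : ℕ := Nat.card (idx x).1 with hk
  set a : ℤ := dlog x with ha
  set b : ℤ := dlog (n • x) with hb
  have hgen : gen (idx (n • x)) = gen (idx x) := by rw [hidx]
  have hspec : b • gen (idx x) = n • x := by rw [← hgen]; exact dlog_spec (n • x)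
  have hspec2 : (n * a) • gen (idx x) = n • x := by rw [mul_smul, dlog_spec]
  have hdvd : (k : ℤ) ∣ b - n * a := by
    have h0 : (b - n * a) • gen (idx x) = 0 := by
      rw [sub_smul, hspec, hspec2, sub_self]
    have := addOrderOf_dvd_iff_zsmul_eq_zero.2 h0
    rwa [addOrderOf_gen] at this
  have hbcop : IsCoprime b (k : ℤ) := by
    have := isCoprime_dlog (n • x)
    rwa [hidx] at this
  have hkey : (oo d k : ℤ) ∣ b ^ d - (n * a) ^ d := pow_congr hd hbcop hdvd
  have hcast : ((b ^ d : ℤ) : ZMod (oo d k)) = (((n * a) ^ d : ℤ) : ZMod (oo d k)) := by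
    rw [ZMod.intCast_eq_intCast_iff]
    refine Int.modEq_iff_dvd.2 ?_
    have : (n * a) ^ d - b ^ d = -(b ^ d - (n * a) ^ d) := by ring
    rw [this]
    exact hkey.neg_right
  rw [phi0, phi0, of_intCast_eq d hidx]
  rw [show dlog (n • x) = b from rfl, show dlog x = a from rfl]
  rw [hcast, show ((n * a) ^ d : ℤ) = n ^ d * a ^ d by ring]
  rw [← map_zsmul (DirectSum.of (bfam d G) (idx x)) (n ^ d)]
  congr 1
  rw [zsmul_eq_mul]
  push_cast
  ring

def phi (d : ℕ) (G : Type*) [AddCommGroup G] : FreeAbelianGroup G →+ ⨁ C, bfam d G C :=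
  FreeAbelianGroup.lift (phi0 d)

lemma phi_of (d : ℕ) (x : G) : phi d G (FreeAbelianGroup.of x) = phi0 d x :=
  FreeAbelianGroup.lift_apply_of _ _

lemma hrel_le_ker {d : ℕ} (hd : 1 ≤ d) : hrel d G ≤ (phi d G).ker := by
  rw [hrel, AddSubgroup.closure_le]
  rintro z ⟨x, n, hcop, rfl⟩
  simp only [SetLike.mem_coe, AddMonoidHom.mem_ker, map_sub, map_zsmul]
  rw [phi_of, phi_of, phi0_rel hd hcop, sub_self]

def phibar (d : ℕ) (G : Type*) [AddCommGroup G] (hd : 1 ≤ d) :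
    GBr d G →+ ⨁ C, bfam d G C :=
  QuotientAddGroup.lift (hrel d G) (phi d G) (hrel_le_ker hd)

lemma phibar_brk {d : ℕ} (hd : 1 ≤ d) (x : G) :
    phibar d G hd (brk d x) = phi0 d x :=
  phi_of d x

lemma brk_rel {d : ℕ} {x : G} {n : ℤ} (h : IsCoprime n (addOrderOf x : ℤ)) :
    brk d (n • x) = n ^ d • brk d x := by
  have h2 : n ^ d • brk d x = QuotientAddGroup.mk (n ^ d • FreeAbelianGroup.of x) := by
    rw [brk, ← QuotientAddGroup.mk'_apply, ← QuotientAddGroup.mk'_apply, ← map_zsmul]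
  rw [brk, h2, QuotientAddGroup.eq_iff_sub_mem]
  exact AddSubgroup.subset_closure ⟨x, n, h, rfl⟩

lemma oo_smul_brk (d : ℕ) (C : {C : AddSubgroup G // IsAddCyclic C}) :
    (oo d (Nat.card C.1) : ℤ) • brk d (gen C) = 0 := by
  set k : ℕ := Nat.card C.1 with hk
  set a : GBr d G := brk d (gen C) with hadef
  have hord : addOrderOf (gen C) = k := addOrderOf_gen C
  have key : ∀ z ∈ Ideal.span {z : ℤ | ∃ u : ℤ, (k : ℤ) ∣ (u - 1) ∧ z = u ^ d - 1},
      z • a = 0 := by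
    intro z hz
    refine Submodule.span_induction ?_ ?_ ?_ ?_ hz
    · rintro z ⟨u, hu, rfl⟩
      have hcop : IsCoprime u (addOrderOf (gen C) : ℤ) := by
        obtain ⟨t, ht⟩ := hu
        exact ⟨1, -t, by rw [hord]; linarith⟩
      have hug : u • gen C = gen C := by
        have h0 : (u - 1) • gen C = 0 := by
          apply addOrderOf_dvd_iff_zsmul_eq_zero.1
          rw [hord]; exact hu
        rw [sub_smul, one_smul, sub_eq_zero] at h0
        exact h0
      have hrel1 := brk_rel (d := d) hcop
      rw [hug] at hrel1
      rw [sub_smul, one_smul, ← hrel1, sub_self]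
    · simp
    · intro y z _ _ hy hz
      rw [add_smul, hy, hz, add_zero]
    · intro c z _ hz
      rw [smul_eq_mul, mul_smul, hz, smul_zero]
  have hgen := key _ (Submodule.IsPrincipal.generator_mem
    (Ideal.span {z : ℤ | ∃ u : ℤ, (k : ℤ) ∣ (u - 1) ∧ z = u ^ d - 1}))
  rcases Int.natAbs_eq (Submodule.IsPrincipal.generator
      (Ideal.span {z : ℤ | ∃ u : ℤ, (k : ℤ) ∣ (u - 1) ∧ z = u ^ d - 1})) with h | h
  · rw [oo, ← h, hgen]
  · rw [oo, show ((Submodule.IsPrincipal.generator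
        (Ideal.span {z : ℤ | ∃ u : ℤ, (k : ℤ) ∣ (u - 1) ∧ z = u ^ d - 1})).natAbs : ℤ) =
        -(Submodule.IsPrincipal.generator
        (Ideal.span {z : ℤ | ∃ u : ℤ, (k : ℤ) ∣ (u - 1) ∧ z = u ^ d - 1})) by omega,
      neg_smul, hgen, neg_zero]

def psi (d : ℕ) (G : Type*) [AddCommGroup G] : (⨁ C, bfam d G C) →+ GBr d G :=
  DirectSum.toAddMonoid fun C =>
    ZMod.lift (oo d (Nat.card C.1))
      ⟨zmultiplesHom _ (brk d (gen C)), oo_smul_brk d C⟩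

lemma psi_of (d : ℕ) (C : {C : AddSubgroup G // IsAddCyclic C}) (b : ℤ) :
    psi d G (DirectSum.of (bfam d G) C ((b : ℤ) : ZMod (oo d (Nat.card C.1)))) =
      b • brk d (gen C) := by
  rw [psi, DirectSum.toAddMonoid_of, ZMod.lift_coe]
  rfl

lemma dlog_gen (d : ℕ) (C : {C : AddSubgroup G // IsAddCyclic C}) :
    ((dlog (gen C) ^ d : ℤ) : ZMod (oo d (Nat.card C.1))) = 1 := by
  have hidx : idx (gen C) = C := Subtype.ext (zmultiples_gen C)
  have hspec : dlog (gen C) • gen (idx (gen C)) = gen C := dlog_spec (gen C)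
  rw [hidx] at hspec
  have h0 : (dlog (gen C) - 1) • gen C = 0 := by
    rw [sub_smul, one_smul, hspec, sub_self]
  have hdvd : (Nat.card C.1 : ℤ) ∣ dlog (gen C) - 1 := by
    have := addOrderOf_dvd_iff_zsmul_eq_zero.2 h0
    rwa [addOrderOf_gen] at this
  have hoo := oo_dvd d hdvd
  have hcast : ((dlog (gen C) ^ d : ℤ) : ZMod (oo d (Nat.card C.1))) = ((1 : ℤ) : ZMod _) := by
    rw [ZMod.intCast_eq_intCast_iff]
    refine Int.modEq_iff_dvd.2 ?_
    have : (1 : ℤ) - dlog (gen C) ^ d = -(dlog (gen C) ^ d - 1) := by ring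
    rw [this]
    exact hoo.neg_right
  simpa using hcast

lemma phibar_psi {d : ℕ} (hd : 1 ≤ d) :
    (phibar d G hd).comp (psi d G) = AddMonoidHom.id _ := by
  apply DirectSum.addHom_ext'
  intro C
  apply AddMonoidHom.ext
  intro y
  obtain ⟨b, rfl⟩ := ZMod.intCast_surjective y
  simp only [AddMonoidHom.comp_apply, AddMonoidHom.id_apply]
  rw [psi_of, map_zsmul, phibar_brk hd, phi0]
  have hidx : idx (gen C) = C := Subtype.ext (zmultiples_gen C)
  rw [of_intCast_eq d hidx, dlog_gen d C, ← map_zsmul (DirectSum.of (bfam d G) C)]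
  congr 1
  rw [zsmul_eq_mul, mul_one]

lemma psi_phibar {d : ℕ} (hd : 1 ≤ d) :
    (psi d G).comp (phibar d G hd) = AddMonoidHom.id _ := by
  apply QuotientAddGroup.addMonoidHom_ext
  apply FreeAbelianGroup.lift_ext
  intro x
  show psi d G (phibar d G hd (brk d x)) = brk d x
  rw [phibar_brk hd, phi0, psi_of]
  have hspec : dlog x • gen (idx x) = x := dlog_spec x
  have hcop : IsCoprime (dlog x) (addOrderOf (gen (idx x)) : ℤ) := by
    rw [addOrderOf_gen]; exact isCoprime_dlog x
  have hrel1 := brk_rel (d := d) hcop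
  rw [hspec] at hrel1
  rw [← hrel1]

end Stmt3

theorem stmt3 (G : Type*) [AddCommGroup G] [Finite G] (d : ℕ) (hd : 1 ≤ d) :
    Nonempty (GBr d G ≃+
      ⨁ C : {C : AddSubgroup G // IsAddCyclic C}, ZMod (oo d (Nat.card C.1))) := by
  exact ⟨{ toFun := Stmt3.phibar d G hd, invFun := Stmt3.psi d G,
           left_inv := fun a => DFunLike.congr_fun (Stmt3.psi_phibar hd) a,
           right_inv := fun a => DFunLike.congr_fun (Stmt3.phibar_psi hd) a,
           map_add' := map_add _ }⟩

end
end

section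
/- Let G be a finite abelian group, d ≥ 1 an integer, and x ∈ G. Then the order of the element [x] in the abelian group G[d] equals o_d(o(x)), where o(x) is the order of x in G. -/
open scoped DirectSum

noncomputable section

/-! ### Auxiliary lemmas -/

lemma oo_dvd (d k : ℕ) (u : ℤ) (hu : (k : ℤ) ∣ (u - 1)) : (oo d k : ℤ) ∣ u ^ d - 1 := by
  rw [oo, Int.natAbs_dvd]
  exact (Submodule.IsPrincipal.mem_iff_generator_dvd _).mp
    (Ideal.subset_span ⟨u, hu, rfl⟩)

lemma oo_pos (d k : ℕ) (hd : 1 ≤ d) (hk : 1 ≤ k) : 0 < oo d k := by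
  rcases Nat.eq_zero_or_pos (oo d k) with h0 | h
  · exfalso
    have hdvd := oo_dvd d k (1 + k) ⟨1, by ring⟩
    rw [h0] at hdvd
    norm_num at hdvd
    have h1 : (1 : ℤ) < 1 + (k : ℤ) := by
      have : (1 : ℤ) ≤ (k : ℤ) := by exact_mod_cast hk
      linarith
    have h2 : (1 : ℤ) < (1 + (k : ℤ)) ^ d := one_lt_pow₀ h1 (by omega)
    omega
  · exact h

lemma oo_dvd_sub (d k : ℕ) (u v : ℤ) (hu : IsCoprime u (k : ℤ))
    (huv : (k : ℤ) ∣ u - v) : (oo d k : ℤ) ∣ u ^ d - v ^ d := by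
  obtain ⟨a, b, hab⟩ := hu
  have h1 : (k : ℤ) ∣ a * u - 1 := ⟨-b, by linarith⟩
  have h2 : (k : ℤ) ∣ a * v - 1 := by
    have he : a * v - 1 = (a * u - 1) - a * (u - v) := by ring
    rw [he]
    exact dvd_sub h1 (huv.mul_left a)
  obtain ⟨c, hc⟩ := oo_dvd d k _ h1
  have d2 := oo_dvd d k _ h2
  have d3 : (oo d k : ℤ) ∣ a ^ d * (u ^ d - v ^ d) := by
    have he : a ^ d * (u ^ d - v ^ d) = ((a * u) ^ d - 1) - ((a * v) ^ d - 1) := by ring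
    rw [he]
    exact dvd_sub ⟨c, hc⟩ d2
  have hcop : IsCoprime ((oo d k : ℤ)) (a ^ d) :=
    IsCoprime.symm ⟨u ^ d, -c, by rw [mul_pow] at hc; linarith⟩
  exact hcop.dvd_of_dvd_mul_left d3

lemma addOrderOf_zsmul_coprime {G : Type*} [AddCommGroup G] (y : G) (n : ℤ)
    (h : IsCoprime n (addOrderOf y : ℤ)) : addOrderOf (n • y) = addOrderOf y := by
  apply Nat.dvd_antisymm
  · apply addOrderOf_dvd_of_nsmul_eq_zero
    have hc : addOrderOf y • (n • y) = n • (addOrderOf y • y) := smul_comm _ _ _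
    rw [hc, addOrderOf_nsmul_eq_zero, smul_zero]
  · have h1 : ((addOrderOf (n • y) : ℤ) * n) • y = 0 := by
      rw [mul_smul, natCast_zsmul, addOrderOf_nsmul_eq_zero]
    have h2 : (addOrderOf y : ℤ) ∣ (addOrderOf (n • y) : ℤ) * n :=
      (addOrderOf_dvd_iff_zsmul_eq_zero).mpr h1
    have h3 : (addOrderOf y : ℤ) ∣ (addOrderOf (n • y) : ℤ) :=
      (h.symm).dvd_of_dvd_mul_right h2
    exact_mod_cast h3

open Classical in
/-- aux -/
def fmap (d : ℕ) {G : Type*} [AddCommGroup G] (x : G) (y : G) :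
    ZMod (oo d (addOrderOf x)) :=
  if h : ∃ u : ℤ, IsCoprime u (addOrderOf x : ℤ) ∧ u • x = y then
    ((h.choose : ZMod (oo d (addOrderOf x)))) ^ d
  else 0

lemma fmap_eq (d : ℕ) {G : Type*} [AddCommGroup G] (x : G) (u : ℤ)
    (hu : IsCoprime u (addOrderOf x : ℤ)) :
    fmap d x (u • x) = (u : ZMod (oo d (addOrderOf x))) ^ d := by
  have h : ∃ v : ℤ, IsCoprime v (addOrderOf x : ℤ) ∧ v • x = u • x := ⟨u, hu, rfl⟩
  rw [fmap, dif_pos h]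
  obtain ⟨hc1, hc2⟩ := h.choose_spec
  have hk : (addOrderOf x : ℤ) ∣ h.choose - u := by
    rw [addOrderOf_dvd_iff_zsmul_eq_zero, sub_smul, hc2, sub_self]
  have hdvd := oo_dvd_sub d (addOrderOf x) h.choose u hc1 hk
  have hz : ((h.choose ^ d - u ^ d : ℤ) : ZMod (oo d (addOrderOf x))) = 0 := by
    rw [ZMod.intCast_zmod_eq_zero_iff_dvd]
    exact hdvd
  push_cast at hz
  rw [sub_eq_zero] at hz
  exact hz

lemma fmap_rel (d : ℕ) {G : Type*} [AddCommGroup G] (x : G) (y : G) (n : ℤ)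
    (h : IsCoprime n (addOrderOf y : ℤ)) :
    fmap d x (n • y) = (n : ZMod (oo d (addOrderOf x))) ^ d * fmap d x y := by
  by_cases hy : ∃ u : ℤ, IsCoprime u (addOrderOf x : ℤ) ∧ u • x = y
  · obtain ⟨u, hu, rfl⟩ := hy
    rw [addOrderOf_zsmul_coprime x u hu] at h
    rw [smul_smul, fmap_eq d x _ (h.mul_left hu), fmap_eq d x u hu]
    push_cast
    ring
  · have hny : ¬ ∃ u : ℤ, IsCoprime u (addOrderOf x : ℤ) ∧ u • x = n • y := by
      rintro ⟨u, hu, hux⟩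
      obtain ⟨a, b, hab⟩ := h
      have hordy : addOrderOf y = addOrderOf x := by
        rw [← addOrderOf_zsmul_coprime y n ⟨a, b, hab⟩, ← hux,
          addOrderOf_zsmul_coprime x u hu]
      refine hy ⟨a * u, ?_, ?_⟩
      · rw [← hordy]
        exact IsCoprime.mul_left ⟨n, b, by linarith⟩ (by rw [hordy]; exact hu)
      · have h1 : (a * u) • x = (a * n) • y := by
          rw [mul_smul, hux, mul_smul]
        rw [h1]
        have h2 : ((a * n - 1 : ℤ)) • y = 0 := by
          rw [addOrderOf_dvd_iff_zsmul_eq_zero.symm.mpr]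
          exact ⟨-b, by linarith⟩
        have h3 := sub_smul (a * n) 1 y
        rw [h2, one_smul] at h3
        exact sub_eq_zero.mp h3.symm
    rw [fmap, dif_neg hny, fmap, dif_neg hy, mul_zero]

lemma oo_smul_mem_hrel (d : ℕ) {G : Type*} [AddCommGroup G] (x : G) :
    (oo d (addOrderOf x) : ℤ) • FreeAbelianGroup.of x ∈ hrel d G := by
  let I : Ideal ℤ :=
  { carrier := {m : ℤ | m • FreeAbelianGroup.of x ∈ hrel d G}
    add_mem' := fun {a b} ha hb => by
      simpa [add_smul] using AddSubgroup.add_mem _ ha hb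
    zero_mem' := by
      show (0 : ℤ) • FreeAbelianGroup.of x ∈ hrel d G
      rw [zero_smul]
      exact AddSubgroup.zero_mem _
    smul_mem' := fun c m hm => by
      have : (c * m) • FreeAbelianGroup.of x = c • (m • FreeAbelianGroup.of x) :=
        mul_smul c m _
      simpa [smul_eq_mul, this] using AddSubgroup.zsmul_mem _ hm c }
  have hsub : Ideal.span {z : ℤ | ∃ u : ℤ, (addOrderOf x : ℤ) ∣ (u - 1) ∧ z = u ^ d - 1} ≤ I := by
    rw [Ideal.span_le]
    rintro z ⟨u, ⟨t, ht⟩, rfl⟩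
    show (u ^ d - 1) • FreeAbelianGroup.of x ∈ hrel d G
    have hcop : IsCoprime u (addOrderOf x : ℤ) := ⟨1, -t, by linarith⟩
    have hux : u • x = x := by
      have h0 : ((u - 1 : ℤ)) • x = 0 := by
        rw [ht, mul_comm, mul_smul, natCast_zsmul, addOrderOf_nsmul_eq_zero, smul_zero]
      have h1 := sub_smul u 1 x
      rw [h0, one_smul] at h1
      exact sub_eq_zero.mp h1.symm
    have hmem : FreeAbelianGroup.of (u • x) - u ^ d • FreeAbelianGroup.of x ∈ hrel d G :=
      AddSubgroup.subset_closure ⟨x, u, hcop, rfl⟩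
    rw [hux] at hmem
    have hneg := AddSubgroup.neg_mem _ hmem
    rw [neg_sub] at hneg
    have he : u ^ d • FreeAbelianGroup.of x - FreeAbelianGroup.of x
        = (u ^ d - 1) • FreeAbelianGroup.of x := by
      rw [sub_smul, one_smul]
    rwa [he] at hneg
  have hgen : Submodule.IsPrincipal.generator
      (Ideal.span {z : ℤ | ∃ u : ℤ, (addOrderOf x : ℤ) ∣ (u - 1) ∧ z = u ^ d - 1}) ∈ I :=
    hsub (Submodule.IsPrincipal.generator_mem _)
  set g := Submodule.IsPrincipal.generator
      (Ideal.span {z : ℤ | ∃ u : ℤ, (addOrderOf x : ℤ) ∣ (u - 1) ∧ z = u ^ d - 1}) with hg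
  have hoo : (oo d (addOrderOf x) : ℤ) = g ∨ (oo d (addOrderOf x) : ℤ) = -g := by
    rcases Int.natAbs_eq g with h | h
    · left; rw [oo, ← hg, ← h]
    · right; rw [oo, ← hg]; omega
  rcases hoo with h | h
  · rw [h]; exact hgen
  · rw [h, neg_smul]
    exact AddSubgroup.neg_mem _ hgen

theorem stmt4 (G : Type*) [AddCommGroup G] [Finite G] (d : ℕ) (hd : 1 ≤ d) (x : G) :
    addOrderOf (brk d x) = oo d (addOrderOf x) := by
  set k := addOrderOf x with hk
  set N := oo d k with hN
  have hk1 : 1 ≤ k := addOrderOf_pos x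
  have hNpos : 0 < N := oo_pos d k hd hk1
  haveI : NeZero N := ⟨hNpos.ne'⟩
  let φ : FreeAbelianGroup G →+ ZMod N := FreeAbelianGroup.lift (fmap d x)
  have hker : ∀ z ∈ hrel d G, φ z = 0 := by
    intro z hz
    have hle : hrel d G ≤ φ.ker := by
      rw [hrel]
      apply (AddSubgroup.closure_le _).mpr
      rintro w ⟨y, n, hcop, rfl⟩
      simp only [SetLike.mem_coe, AddMonoidHom.mem_ker, map_sub, map_zsmul]
      have h1 : φ (FreeAbelianGroup.of (n • y)) = fmap d x (n • y) :=
        FreeAbelianGroup.lift_apply_of _ _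
      have h2 : φ (FreeAbelianGroup.of y) = fmap d x y := FreeAbelianGroup.lift_apply_of _ _
      rw [h1, h2, fmap_rel d x y n hcop, zsmul_eq_mul]
      push_cast
      ring
    exact hle hz
  let ψ : GBr d G →+ ZMod N := QuotientAddGroup.lift (hrel d G) φ hker
  have hψ : ψ (brk d x) = 1 := by
    show φ (FreeAbelianGroup.of x) = 1
    have h1 : φ (FreeAbelianGroup.of x) = fmap d x x := FreeAbelianGroup.lift_apply_of _ _
    have h2 := fmap_eq d x 1 isCoprime_one_left
    rw [one_smul] at h2
    rw [h1, h2]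
    simp
  apply Nat.dvd_antisymm
  · apply addOrderOf_dvd_of_nsmul_eq_zero
    have hmem : N • FreeAbelianGroup.of x ∈ hrel d G := by
      have := oo_smul_mem_hrel d x
      rwa [natCast_zsmul] at this
    show N • (QuotientAddGroup.mk (FreeAbelianGroup.of x) : GBr d G) = 0
    rw [← QuotientAddGroup.mk_nsmul]
    exact (QuotientAddGroup.eq_zero_iff _).mpr hmem
  · have h0 : (addOrderOf (brk d x)) • (brk d x) = 0 := addOrderOf_nsmul_eq_zero _
    have h1 := congrArg ψ h0
    rw [map_nsmul, hψ, map_zero] at h1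
    rwa [nsmul_eq_mul, mul_one, ZMod.natCast_eq_zero_iff] at h1

end
end

section
/- Let d and k be positive integers and let p be a prime. If p divides o_d(k)/k (which is an integer since k divides o_d(k)), then p divides d. -/
open scoped DirectSum

noncomputable section

lemma binom_aux (k : ℤ) (d : ℕ) : ∃ m : ℤ, (1 + k) ^ d = 1 + d * k + k ^ 2 * m := by
  induction d with
  | zero => exact ⟨0, by ring⟩
  | succ n ih =>
    obtain ⟨m, hm⟩ := ih
    refine ⟨n + m + k * m, ?_⟩
    rw [pow_succ, hm]
    push_cast
    ring

theorem stmt8 (d k p : ℕ) (hd : 0 < d) (hk : 0 < k) (hp : p.Prime)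
    (h : p ∣ oo d k / k) : p ∣ d := by
  set S : Set ℤ := {z : ℤ | ∃ u : ℤ, (k : ℤ) ∣ (u - 1) ∧ z = u ^ d - 1} with hS
  set g : ℤ := Submodule.IsPrincipal.generator (Ideal.span S) with hg
  have hdvd : ∀ u : ℤ, (k : ℤ) ∣ (u - 1) → g ∣ u ^ d - 1 := by
    intro u hu
    rw [← Submodule.IsPrincipal.mem_iff_generator_dvd]
    exact Ideal.subset_span ⟨u, hu, rfl⟩
  have hkg : (k : ℤ) ∣ g := by
    have hle : Ideal.span S ≤ Ideal.span {(k : ℤ)} := by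
      rw [Ideal.span_le]
      rintro z ⟨u, hu, rfl⟩
      rw [SetLike.mem_coe, Ideal.mem_span_singleton]
      have h1 : u - 1 ∣ u ^ d - 1 := by
        have := sub_dvd_pow_sub_pow u 1 d
        simpa using this
      exact hu.trans h1
    have hmem := hle (Submodule.IsPrincipal.generator_mem (Ideal.span S))
    rwa [Ideal.mem_span_singleton] at hmem
  have hko : k ∣ oo d k := by
    have := Int.natAbs_dvd_natAbs.mpr hkg
    simpa [oo, ← hS, ← hg] using this
  have hkpo : k * p ∣ oo d k := by
    have h1 : k * p ∣ k * (oo d k / k) := mul_dvd_mul_left k h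
    rwa [Nat.mul_div_cancel' hko] at h1
  have hkpg : ((k : ℤ) * p) ∣ g := by
    have h1 : ((k * p : ℕ) : ℤ) ∣ ((oo d k : ℕ) : ℤ) := Int.natCast_dvd_natCast.mpr hkpo
    have h2 : ((k * p : ℕ) : ℤ) ∣ g := by
      have hoo : oo d k = g.natAbs := rfl
      rw [hoo] at h1
      exact Int.dvd_natAbs.mp h1
    simpa using h2
  by_cases hpk : p ∣ k
  · -- p divides k: use u = 1 + k
    have hg1 : g ∣ (1 + (k : ℤ)) ^ d - 1 := hdvd _ (by ring_nf; exact dvd_refl _)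
    obtain ⟨m, hm⟩ := binom_aux (k : ℤ) d
    have h1 : ((k : ℤ) * p) ∣ (k : ℤ) * ((d : ℤ) + k * m) := by
      have := hkpg.trans hg1
      rw [hm] at this
      convert this using 1
      · rfl
      ring
    have h2 : (p : ℤ) ∣ (d : ℤ) + k * m := by
      have hk0 : (k : ℤ) ≠ 0 := by exact_mod_cast hk.ne'
      exact (mul_dvd_mul_iff_left hk0).mp h1
    have h3 : (p : ℤ) ∣ (k : ℤ) * m :=
      Dvd.dvd.mul_right (Int.natCast_dvd_natCast.mpr hpk) m
    have h4 : (p : ℤ) ∣ (d : ℤ) := by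
      have := h2.sub h3
      simpa using this
    exact_mod_cast h4
  · -- p does not divide k: derive a contradiction
    exfalso
    have hcop : IsCoprime (p : ℤ) (k : ℤ) := by
      rw [Int.isCoprime_iff_gcd_eq_one]
      exact_mod_cast (hp.coprime_iff_not_dvd.mpr hpk)
    obtain ⟨x, y, hxy⟩ := hcop
    set u : ℤ := x * p with hu
    have hu1 : (k : ℤ) ∣ u - 1 := by
      refine ⟨-y, ?_⟩
      have : u - 1 = -(y * k) := by rw [hu]; linarith [hxy]
      rw [this]; ring
    have hgu : g ∣ u ^ d - 1 := hdvd u hu1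
    have hpu : (p : ℤ) ∣ u ^ d := dvd_pow (dvd_mul_left (p:ℤ) x) hd.ne'
    have hpg : (p : ℤ) ∣ g := dvd_trans (Dvd.intro_left _ rfl) hkpg
    have hp1 : (p : ℤ) ∣ 1 := by
      have := hpu.sub (hpg.trans hgu)
      simpa using this
    have : p ∣ 1 := by exact_mod_cast hp1
    exact hp.one_lt.ne' (Nat.dvd_one.mp this)

end
end

section
/- Let d and k be positive integers and let p be a prime dividing k. Then v_p(o_d(k)) ≥ v_p(k) + v_p(d), and if p is odd then v_p(o_d(k)) = v_p(k) + v_p(d). Here v_p(m) denotes the p-adic valuation of m, i.e. the exponent of the highest power of p dividing m. -/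
open scoped DirectSum

noncomputable section

/-- pointwise lower bound on the valuation -/
lemma aux_pointwise (d k p : ℕ) (hd : 0 < d) (hk : 0 < k) (hp : p.Prime) (hpk : p ∣ k)
    {u : ℤ} (hu : (k : ℤ) ∣ (u - 1)) :
    (p : ℤ) ^ (padicValNat p k + padicValNat p d) ∣ u ^ d - 1 := by
  haveI : Fact p.Prime := ⟨hp⟩
  set a := padicValNat p k
  set b := padicValNat p d
  have hpa : (p : ℤ) ^ a ∣ u - 1 := by
    refine dvd_trans ?_ hu
    exact_mod_cast Int.natCast_dvd_natCast.mpr (pow_padicValNat_dvd (p := p) (n := k))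
  have hpu1 : (p : ℤ) ∣ u - 1 := dvd_trans (by exact_mod_cast Int.natCast_dvd_natCast.mpr hpk) hu
  have hpu : ¬ (p : ℤ) ∣ u := by
    intro h
    have : (p : ℤ) ∣ 1 := by
      have := dvd_sub h hpu1
      simpa using this
    have h1 := Int.le_of_dvd one_pos this
    have h2 := hp.two_le
    omega
  have hema : (a : ℕ∞) ≤ emultiplicity (p : ℤ) (u - 1) := le_emultiplicity_of_pow_dvd hpa
  have hemb : emultiplicity (p : ℤ) (d : ℤ) = (b : ℕ∞) := by
    rw [show ((d : ℕ) : ℤ) = ((d : ℕ) : ℤ) from rfl, Int.natCast_emultiplicity,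
      ← padicValNat_eq_emultiplicity hd.ne']
  apply pow_dvd_of_le_emultiplicity
  rcases hp.eq_two_or_odd' with rfl | hodd
  · -- p = 2
    rcases Nat.even_or_odd d with hde | hdo
    · -- d even, use LTE for 2
      have h2 : emultiplicity 2 (u ^ d - 1 ^ d) + 1 =
          emultiplicity 2 (u + 1) + emultiplicity 2 (u - 1) + emultiplicity (2 : ℤ) (d : ℤ) :=
        Int.two_pow_sub_pow (by simpa using hpu1) (by simpa using hpu) hde
      have h3 : (1 : ℕ∞) ≤ emultiplicity (2 : ℤ) (u + 1) := by
        have : (2 : ℤ) ∣ u + 1 := by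
          rcases hpu1 with ⟨c, hc⟩
          exact ⟨c + 1, by push_cast at hc ⊢; linarith⟩
        simpa using le_emultiplicity_of_pow_dvd (k := 1) (by simpa using this)
      have key : ((a + b : ℕ) : ℕ∞) + 1 ≤ emultiplicity (2 : ℤ) (u ^ d - 1 ^ d) + 1 := by
        rw [h2]
        push_cast at hema hemb ⊢
        calc ((a : ℕ∞) + b) + 1 = 1 + (a : ℕ∞) + b := by ring
          _ ≤ emultiplicity (2 : ℤ) (u + 1) + emultiplicity 2 (u - 1) +
              emultiplicity (2 : ℤ) (d : ℤ) := by
            push_cast at hemb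
            rw [hemb]
            exact add_le_add (add_le_add h3 (by simpa using hema)) le_rfl
      have := (WithTop.add_le_add_iff_right (by simp : (1 : ℕ∞) ≠ ⊤)).mp key
      simpa using (show ((a + b : ℕ) : ℕ∞) ≤ emultiplicity (2 : ℤ) (u ^ d - 1 ^ d) from this)
    · -- d odd: b = 0
      have hb0 : b = 0 := by
        simp only [b]
        rw [padicValNat.eq_zero_iff]
        right; right
        exact Nat.two_dvd_ne_zero.mpr (Nat.odd_iff.mp hdo)
      have : (2 : ℤ) ^ a ∣ u ^ d - 1 ^ d :=
        dvd_trans (by simpa using hpa) (sub_dvd_pow_sub_pow u 1 d)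
      rw [hb0]
      simpa using le_emultiplicity_of_pow_dvd (by simpa using this)
  · -- p odd
    have h2 : emultiplicity (p : ℤ) (u ^ d - 1 ^ d) =
        emultiplicity (p : ℤ) (u - 1) + emultiplicity p d :=
      Int.emultiplicity_pow_sub_pow hp hodd (by simpa using hpu1) hpu d
    have hemb' : emultiplicity p d = (b : ℕ∞) := (padicValNat_eq_emultiplicity hd.ne').symm
    calc ((a + b : ℕ) : ℕ∞) = (a : ℕ∞) + b := by push_cast; ring
      _ ≤ emultiplicity (p : ℤ) (u - 1) + emultiplicity p d := by
          rw [hemb']; exact add_le_add hema le_rfl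
      _ = emultiplicity (p : ℤ) (u ^ d - 1) := by rw [← h2]; simp

theorem stmt9 (d k p : ℕ) (hd : 0 < d) (hk : 0 < k) (hp : p.Prime) (hpk : p ∣ k) :
    padicValNat p k + padicValNat p d ≤ padicValNat p (oo d k) ∧
      (Odd p → padicValNat p (oo d k) = padicValNat p k + padicValNat p d) := by
  haveI : Fact p.Prime := ⟨hp⟩
  set a := padicValNat p k with ha
  set b := padicValNat p d with hb
  set I : Ideal ℤ := Ideal.span {z : ℤ | ∃ u : ℤ, (k : ℤ) ∣ (u - 1) ∧ z = u ^ d - 1} with hI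
  set g : ℤ := Submodule.IsPrincipal.generator I with hg
  have hoo : oo d k = g.natAbs := rfl
  -- the canonical element (1+k)^d - 1
  have hz0S : (1 + (k : ℤ)) ^ d - 1 ∈
      {z : ℤ | ∃ u : ℤ, (k : ℤ) ∣ (u - 1) ∧ z = u ^ d - 1} :=
    ⟨1 + (k : ℤ), ⟨1, by ring⟩, rfl⟩
  have hgz0 : g ∣ (1 + (k : ℤ)) ^ d - 1 :=
    (Submodule.IsPrincipal.mem_iff_generator_dvd I).mp (Ideal.subset_span hz0S)
  have hz0ne : (1 + (k : ℤ)) ^ d - 1 ≠ 0 := by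
    have h2 : (1 : ℤ) < 1 + (k : ℤ) := by exact_mod_cast by omega
    have := one_lt_pow₀ h2 hd.ne'
    omega
  have hooz : oo d k ≠ 0 := by
    rw [hoo, Int.natAbs_ne_zero]
    intro h0
    rw [h0] at hgz0
    exact hz0ne (zero_dvd_iff.mp hgz0)
  -- lower bound
  have hdvd : (p : ℤ) ^ (a + b) ∣ g := by
    have hle : I ≤ Ideal.span {(p : ℤ) ^ (a + b)} := by
      rw [hI, Ideal.span_le]
      rintro z ⟨u, hu, rfl⟩
      exact Ideal.mem_span_singleton.mpr (aux_pointwise d k p hd hk hp hpk hu)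
    exact Ideal.mem_span_singleton.mp (hle (Submodule.IsPrincipal.generator_mem I))
  have hdvdn : p ^ (a + b) ∣ oo d k := by
    rw [hoo, show p ^ (a + b) = ((p : ℤ) ^ (a + b)).natAbs by
      rw [Int.natAbs_pow, Int.natAbs_natCast]]
    exact Int.natAbs_dvd_natAbs.mpr hdvd
  have hlow : a + b ≤ padicValNat p (oo d k) :=
    (padicValNat_dvd_iff_le hooz).mp hdvdn
  refine ⟨hlow, fun hodd => ?_⟩
  -- upper bound for odd p
  set N : ℕ := (1 + k) ^ d - 1 with hN
  have h1le : 1 ≤ (1 + k) ^ d := Nat.one_le_pow _ _ (by omega)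
  have hNne : N ≠ 0 := by
    have : 2 ≤ 1 + k := by omega
    have := Nat.one_lt_pow hd.ne' this
    omega
  have hcast : ((N : ℕ) : ℤ) = (1 + (k : ℤ)) ^ d - 1 := by
    rw [hN]
    push_cast [h1le]
    ring
  have hooN : oo d k ∣ N := by
    have h1 : g ∣ (N : ℤ) := by rw [hcast]; exact hgz0
    have h2 := Int.natAbs_dvd_natAbs.mpr h1
    rwa [Int.natAbs_natCast, ← hoo] at h2
  have hvN : padicValNat p N = a + b := by
    have hx : ¬ p ∣ 1 + k := by
      intro h
      have h1 : p ∣ 1 := by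
        have := Nat.dvd_sub h hpk
        simpa using this
      have := hp.two_le
      have := Nat.le_of_dvd one_pos h1
      omega
    have := padicValNat.pow_sub_pow (p := p) hodd (x := 1 + k) (y := 1)
      (by omega) (by simpa using hpk) hx hd.ne'
    simpa [hN, Nat.add_sub_cancel_left] using this
  have hup : padicValNat p (oo d k) ≤ a + b := by
    rw [← hvN]
    exact (padicValNat_dvd_iff_le hNne).mp
      (dvd_trans (pow_padicValNat_dvd) hooN)
  omega

end
end

section
/- Let d, k, k' be positive integers with gcd(k, k') = 1. Then o_d(k·k') ≤ o_d(k)·o_d(k'). -/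
open scoped DirectSum

open scoped Pointwise

noncomputable section


def S (d k : ℕ) : Set ℤ := {z : ℤ | ∃ u : ℤ, (k : ℤ) ∣ (u - 1) ∧ z = u ^ d - 1}

def G (d k : ℕ) : ℤ := Submodule.IsPrincipal.generator (Ideal.span (S d k))

lemma gen_dvd {d k : ℕ} {u : ℤ} (h : (k : ℤ) ∣ (u - 1)) :
    G d k ∣ u ^ d - 1 := by
  rw [G, ← Submodule.IsPrincipal.mem_iff_generator_dvd]
  exact Ideal.subset_span ⟨u, h, rfl⟩

lemma decomp (b : ℕ) : ∀ g : ℕ, 0 < g →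
    ∃ g1 g2 : ℕ, g = g1 * g2 ∧ Nat.Coprime g1 b ∧
      ∀ p : ℕ, p.Prime → p ∣ g2 → p ∣ b := by
  intro g
  induction g using Nat.strong_induction_on with
  | _ g ih =>
    intro hg
    by_cases h1 : Nat.gcd g b = 1
    · exact ⟨g, 1, (mul_one g).symm, h1, fun p hp hpd => absurd (Nat.eq_one_of_dvd_one hpd) hp.ne_one⟩
    · have hcg : Nat.gcd g b ∣ g := Nat.gcd_dvd_left g b
      have hc2 : 2 ≤ Nat.gcd g b := by
        have := Nat.gcd_pos_of_pos_left b hg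
        omega
      have hlt : g / Nat.gcd g b < g := Nat.div_lt_self hg hc2
      have hpos : 0 < g / Nat.gcd g b := Nat.div_pos (Nat.le_of_dvd hg hcg) (by omega)
      obtain ⟨g1, g2, he, hco, hall⟩ := ih _ hlt hpos
      refine ⟨g1, g2 * Nat.gcd g b, ?_, hco, ?_⟩
      · rw [← mul_assoc, ← he, Nat.div_mul_cancel hcg]
      · intro p hp hpd
        rcases (Nat.Prime.dvd_mul hp).mp hpd with hh | hh
        · exact hall p hp hh
        · exact hh.trans (Nat.gcd_dvd_right g b)

lemma key {d k k' M : ℕ} (hkk' : Nat.Coprime k k') (hM : Nat.Coprime M k')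
    {u : ℤ} (hu : (k:ℤ) ∣ u - 1)
    {Gg : ℤ} (hG : ∀ w : ℤ, (k:ℤ) * (k':ℤ) ∣ w - 1 → Gg ∣ w ^ d - 1)
    (hMG : (M:ℤ) ∣ Gg) : (M:ℤ) ∣ u ^ d - 1 := by
  have hco : IsCoprime ((k * M : ℕ) : ℤ) ((k' : ℕ) : ℤ) :=
    Nat.isCoprime_iff_coprime.mpr (Nat.Coprime.mul hkk' hM)
  obtain ⟨x, y, hxy⟩ := hco
  set m : ℤ := ((k * M : ℕ) : ℤ) with hm
  set n : ℤ := ((k' : ℕ) : ℤ) with hn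
  set w : ℤ := u * (y * n) + x * m with hw
  have h1 : m ∣ w - u := ⟨x * (1 - u), by linear_combination u * hxy⟩
  have h2 : n ∣ w - 1 := ⟨y * (u - 1), by linear_combination hxy⟩
  have hkm : (k : ℤ) ∣ m := by rw [hm]; push_cast; exact Dvd.intro _ rfl
  have h3 : (k : ℤ) ∣ w - 1 := by
    have : w - 1 = (w - u) + (u - 1) := by ring
    rw [this]
    exact dvd_add (hkm.trans h1) hu
  have h4 : (k : ℤ) * n ∣ w - 1 :=
    (Nat.isCoprime_iff_coprime.mpr hkk').mul_dvd h3 h2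
  have h5 : Gg ∣ w ^ d - 1 := hG w h4
  have hMm : (M : ℤ) ∣ m := by rw [hm]; push_cast; exact Dvd.intro_left _ rfl
  have h6 : (M : ℤ) ∣ w ^ d - u ^ d :=
    (hMm.trans h1).trans (sub_dvd_pow_sub_pow w u d)
  have : u ^ d - 1 = (w ^ d - 1) - (w ^ d - u ^ d) := by ring
  rw [this]
  exact dvd_sub (hMG.trans h5) h6

lemma G_ne_zero (d k : ℕ) (hd : 0 < d) (hk : 0 < k) : G d k ≠ 0 := by
  intro h0
  have hbot : Ideal.span (S d k) = ⊥ := by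
    rw [← Ideal.span_singleton_generator (Ideal.span (S d k))]
    show Ideal.span {G d k} = ⊥
    rw [h0]
    exact Ideal.span_singleton_eq_bot.mpr rfl
  have hmem : ((k : ℤ) + 1) ^ d - 1 ∈ Ideal.span (S d k) :=
    Ideal.subset_span ⟨(k : ℤ) + 1, by simp, rfl⟩
  rw [hbot, Ideal.mem_bot, sub_eq_zero] at hmem
  have h1 : (1 : ℤ) < (k : ℤ) + 1 := by exact_mod_cast Nat.succ_lt_succ hk
  have := one_lt_pow₀ h1 hd.ne'
  omega

lemma keyAB {d k k' : ℕ} (hd : 0 < d) (hk : 0 < k) (hk' : 0 < k') (h : Nat.Coprime k k')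
    {u v : ℤ} (hu : (k:ℤ) ∣ u - 1) (hv : (k':ℤ) ∣ v - 1) :
    G d (k * k') ∣ (u ^ d - 1) * (v ^ d - 1) := by
  set g : ℕ := (G d (k * k')).natAbs with hgdef
  have hGw : ∀ w : ℤ, (k:ℤ) * (k':ℤ) ∣ w - 1 → G d (k * k') ∣ w ^ d - 1 := by
    intro w hw
    exact gen_dvd (by push_cast; exact hw)
  have hgpos : 0 < g := Int.natAbs_pos.mpr (G_ne_zero d (k * k') hd (by positivity))
  obtain ⟨g1, g2, hg12, hco1, hall2⟩ := decomp k' g hgpos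
  obtain ⟨e1, e2, he12, hco1', hall2'⟩ := decomp k g hgpos
  -- g1 coprime to k', primes of g2 divide k'; e1 coprime to k, primes of e2 divide k
  have habs : ((g : ℤ)) ∣ G d (k * k') := Int.natAbs_dvd.mpr dvd_rfl
  have hg1G : ((g1 : ℤ)) ∣ G d (k * k') :=
    dvd_trans (Int.natCast_dvd_natCast.mpr ⟨g2, hg12⟩) habs
  have he1G : ((e1 : ℤ)) ∣ G d (k * k') :=
    dvd_trans (Int.natCast_dvd_natCast.mpr ⟨e2, he12⟩) habs
  have hA : (g1 : ℤ) ∣ u ^ d - 1 := key h hco1 hu hGw hg1G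
  have hB : (e1 : ℤ) ∣ v ^ d - 1 := by
    refine key h.symm hco1' hv ?_ he1G
    intro w hw
    exact hGw w (by rwa [mul_comm])
  -- coprime g2 e2
  have hco22 : Nat.Coprime g2 e2 := by
    rw [Nat.coprime_iff_gcd_eq_one]
    by_contra hne
    obtain ⟨p, hp, hpd⟩ := Nat.exists_prime_and_dvd hne
    have hp1 : p ∣ k' := hall2 p hp (hpd.trans (Nat.gcd_dvd_left _ _))
    have hp2 : p ∣ k := hall2' p hp (hpd.trans (Nat.gcd_dvd_right _ _))
    exact hp.ne_one (Nat.eq_one_of_dvd_one (h ▸ Nat.dvd_gcd hp2 hp1))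
  have hdvdg : g2 * e2 ∣ g := hco22.mul_dvd_of_dvd_of_dvd ⟨g1, by rw [hg12, Nat.mul_comm]⟩ ⟨e1, by rw [he12, Nat.mul_comm]⟩
  obtain ⟨c, hc⟩ := hdvdg
  have hne : g2 * e2 ≠ 0 := by
    rintro h0
    rw [h0, zero_mul] at hc
    omega
  have hge : g ∣ g1 * e1 := by
    refine ⟨c, ?_⟩
    have hmul : (g1 * e1) * (g2 * e2) = (g * c) * (g2 * e2) := by
      calc (g1 * e1) * (g2 * e2) = (g1 * g2) * (e1 * e2) := by ring
        _ = g * g := by rw [← hg12, ← he12]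
        _ = (g2 * e2 * c) * g := by rw [← hc]
        _ = (g * c) * (g2 * e2) := by ring
    exact Nat.eq_of_mul_eq_mul_right (Nat.pos_of_ne_zero hne) hmul
  have : (g : ℤ) ∣ (u ^ d - 1) * (v ^ d - 1) :=
    dvd_trans (by exact_mod_cast hge) (mul_dvd_mul hA hB)
  rwa [hgdef, Int.natAbs_dvd] at this

theorem stmt11 (d k k' : ℕ) (hd : 0 < d) (hk : 0 < k) (hk' : 0 < k')
    (h : Nat.Coprime k k') : oo d (k * k') ≤ oo d k * oo d k' := by
  have hdvd : G d (k * k') ∣ G d k * G d k' := by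
    have hmem : G d k * G d k' ∈ Ideal.span (S d k) * Ideal.span (S d k') :=
      Ideal.mul_mem_mul (Submodule.IsPrincipal.generator_mem _)
        (Submodule.IsPrincipal.generator_mem _)
    rw [Ideal.span_mul_span'] at hmem
    have hle : Ideal.span (S d k * S d k') ≤ Ideal.span (S d (k * k')) := by
      rw [Ideal.span_le]
      rintro z hz
      obtain ⟨a, ha, b, hb, rfl⟩ := hz
      obtain ⟨u, hu, rfl⟩ := ha
      obtain ⟨v, hv, rfl⟩ := hb
      rw [SetLike.mem_coe, Submodule.IsPrincipal.mem_iff_generator_dvd]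
      exact keyAB hd hk hk' h hu hv
    have := hle hmem
    rwa [Submodule.IsPrincipal.mem_iff_generator_dvd] at this
  have hoo : ∀ m : ℕ, oo d m = (G d m).natAbs := fun m => rfl
  have hdd : oo d (k * k') ∣ oo d k * oo d k' := by
    rw [hoo, hoo, hoo, ← Int.natAbs_mul]
    exact Int.natAbs_dvd_natAbs.mpr hdvd
  refine Nat.le_of_dvd (Nat.mul_pos ?_ ?_) hdd
  · exact Int.natAbs_pos.mpr (G_ne_zero d k hd hk)
  · exact Int.natAbs_pos.mpr (G_ne_zero d k' hd hk')

end
end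

section
/- Let d, d', k be positive integers with gcd(d, d') = 1. Then o_{d·d'}(k)/k = (o_d(k)/k)·(o_{d'}(k)/k); equivalently, k·o_{d·d'}(k) = o_d(k)·o_{d'}(k). -/
open scoped DirectSum

noncomputable section

namespace OoAux

open scoped Pointwise

def S (d k : ℕ) : Set ℤ := {z : ℤ | ∃ u : ℤ, (k : ℤ) ∣ (u - 1) ∧ z = u ^ d - 1}

lemma oo_def (d k : ℕ) :
    oo d k = (Submodule.IsPrincipal.generator (Ideal.span (S d k))).natAbs := rfl

lemma oo_dvd {d k : ℕ} {u : ℤ} (hu : (k : ℤ) ∣ (u - 1)) :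
    (oo d k : ℤ) ∣ u ^ d - 1 := by
  have hm : u ^ d - 1 ∈ Ideal.span (S d k) := Ideal.subset_span ⟨u, hu, rfl⟩
  exact Int.natAbs_dvd.mpr ((Submodule.IsPrincipal.mem_iff_generator_dvd _).mp hm)

lemma dvd_oo {d k : ℕ} {m : ℤ} (hm : ∀ u : ℤ, (k : ℤ) ∣ (u - 1) → m ∣ u ^ d - 1) :
    m ∣ (oo d k : ℤ) := by
  have h1 : Ideal.span (S d k) ≤ Ideal.span {m} := by
    rw [Ideal.span_le]
    rintro z ⟨u, hu, rfl⟩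
    rw [SetLike.mem_coe, Ideal.mem_span_singleton]
    exact hm u hu
  exact Int.dvd_natAbs.mpr (Ideal.mem_span_singleton.mp
    (h1 (Submodule.IsPrincipal.generator_mem _)))

lemma k_dvd {k : ℕ} {u : ℤ} (hu : (k : ℤ) ∣ u - 1) (d : ℕ) : (k : ℤ) ∣ u ^ d - 1 := by
  refine hu.trans ?_
  simpa using sub_dvd_pow_sub_pow u 1 d

lemma oo_pos {d k : ℕ} (hd : 0 < d) (hk : 0 < k) : 0 < oo d k := by
  rcases Nat.eq_zero_or_pos (oo d k) with h0 | h
  · exfalso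
    have := oo_dvd (d := d) (k := k) (u := 1 + (k : ℤ)) (by simp)
    rw [h0] at this
    have h2 : ((1 : ℤ) + k) ^ d - 1 = 0 := zero_dvd_iff.mp (by exact_mod_cast this)
    have h3 : (1 : ℤ) < (1 + (k : ℤ)) ^ d := by
      have hk' : (0 : ℤ) < k := by exact_mod_cast hk
      exact one_lt_pow₀ (by omega) hd.ne'
    omega
  · exact h

lemma dvd_of_emult_le {a b : ℤ} (ha : a ≠ 0) (hb : b ≠ 0)
    (h : ∀ p : ℕ, p.Prime → emultiplicity (p : ℤ) a ≤ emultiplicity (p : ℤ) b) : a ∣ b := by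
  rw [← Int.natAbs_dvd_natAbs]
  have ha' : a.natAbs ≠ 0 := Int.natAbs_ne_zero.mpr ha
  have hb' : b.natAbs ≠ 0 := Int.natAbs_ne_zero.mpr hb
  rw [← Nat.factorization_le_iff_dvd ha' hb']
  intro p
  by_cases hp : p.Prime
  · have h1 : (p : ℤ) ^ (a.natAbs.factorization p) ∣ a := by
      have h0 : (↑(p ^ a.natAbs.factorization p) : ℤ) ∣ (a.natAbs : ℤ) :=
        Int.natCast_dvd_natCast.mpr (Nat.ordProj_dvd a.natAbs p)
      push_cast at h0
      exact h0.trans ((abs_dvd _ _).mpr dvd_rfl)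
    have h2 : (p : ℤ) ^ (a.natAbs.factorization p) ∣ b :=
      pow_dvd_of_le_emultiplicity ((le_emultiplicity_of_pow_dvd h1).trans (h p hp))
    have h3 : p ^ (a.natAbs.factorization p) ∣ b.natAbs := by
      rw [← Int.natCast_dvd_natCast]
      push_cast
      exact (dvd_abs _ _).mpr h2
    exact (Nat.Prime.pow_dvd_iff_le_factorization hp hb').mp h3
  · simp [Nat.factorization_eq_zero_of_not_prime _ hp]

lemma em_two_odd_exp {x : ℤ} (hx : ¬ (2 : ℤ) ∣ x) {n : ℕ} (hn : Odd n) :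
    emultiplicity (2 : ℤ) (x ^ n - 1) = emultiplicity (2 : ℤ) (x - 1) := by
  rw [← geom_sum_mul x n, emultiplicity_mul Int.prime_two]
  have hodd : ¬ (2 : ℤ) ∣ (∑ i ∈ Finset.range n, x ^ i) := by
    intro hdvd
    have hx1 : ((x : ZMod 2)) = 1 := by
      have hmod : x % 2 = 1 := by
        rcases Int.emod_two_eq x with h | h
        · exact absurd (Int.dvd_of_emod_eq_zero h) hx
        · exact h
      rcases Int.odd_iff.mpr hmod with ⟨m, rfl⟩
      push_cast
      rw [show ((2 : ZMod 2)) = 0 by decide]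
      ring
    have h2 : ((∑ i ∈ Finset.range n, x ^ i : ℤ) : ZMod 2) = 0 :=
      (ZMod.intCast_zmod_eq_zero_iff_dvd _ 2).mpr hdvd
    push_cast at h2
    rw [Finset.sum_congr rfl (fun i _ => by rw [hx1, one_pow])] at h2
    simp only [Finset.sum_const, Finset.card_range, nsmul_eq_mul, mul_one] at h2
    have := (ZMod.natCast_eq_zero_iff n 2).mp h2
    exact (Nat.not_even_iff_odd.mpr hn) (even_iff_two_dvd.mpr this)
  rw [emultiplicity_eq_zero.mpr hodd, zero_add]

lemma key {d d' k : ℕ} (hd : 0 < d) (hd' : 0 < d') (hk : 0 < k) (hodd : Odd d')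
    {u v : ℤ} (hu : (k : ℤ) ∣ u - 1) (hv : (k : ℤ) ∣ v - 1) :
    ((k * oo (d * d') k : ℕ) : ℤ) ∣ (u ^ d - 1) * (v ^ d' - 1) := by
  set C := oo (d * d') k with hC
  by_cases hz : (u ^ d - 1) * (v ^ d' - 1) = 0
  · exact hz ▸ dvd_zero _
  have hCpos : 0 < C := oo_pos (Nat.mul_pos hd hd') hk
  have hane : ((k * C : ℕ) : ℤ) ≠ 0 := by
    exact_mod_cast (Nat.mul_pos hk hCpos).ne'
  refine dvd_of_emult_le hane hz ?_
  intro p hp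
  have hpZ : Prime (p : ℤ) := Nat.prime_iff_prime_int.mp hp
  have hsplit : emultiplicity ((p : ℤ)) ((k * C : ℕ) : ℤ) =
      emultiplicity (p : ℤ) (k : ℤ) + emultiplicity (p : ℤ) (C : ℤ) := by
    push_cast
    exact emultiplicity_mul hpZ
  rw [hsplit, emultiplicity_mul hpZ]
  by_cases hpk : (p : ℤ) ∣ (k : ℤ)
  · have hpu1 : (p : ℤ) ∣ u - 1 := hpk.trans hu
    have hpv1 : (p : ℤ) ∣ v - 1 := hpk.trans hv
    have hCu : emultiplicity (p : ℤ) (C : ℤ) ≤ emultiplicity (p : ℤ) (u ^ (d * d') - 1) :=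
      emultiplicity_le_emultiplicity_of_dvd_right (oo_dvd hu)
    rcases eq_or_ne p 2 with rfl | hp2
    · have hu2 : ¬ (2 : ℤ) ∣ u ^ d := by
        intro h2
        have h3 : (2 : ℤ) ∣ u := hpZ.dvd_of_dvd_pow (by exact_mod_cast h2)
        have h4 : ((2 : ℕ) : ℤ) ∣ u - 1 := hpu1
        omega
      have e1 : emultiplicity ((2 : ℕ) : ℤ) (u ^ (d * d') - 1) =
          emultiplicity ((2 : ℕ) : ℤ) (u ^ d - 1) := by
        rw [pow_mul]
        have := em_two_odd_exp hu2 hodd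
        exact_mod_cast this
      have e2 : emultiplicity ((2 : ℕ) : ℤ) ((k : ℕ) : ℤ) ≤
          emultiplicity ((2 : ℕ) : ℤ) (v ^ d' - 1) :=
        emultiplicity_le_emultiplicity_of_dvd_right (k_dvd hv d')
      calc emultiplicity ((2:ℕ):ℤ) (k:ℤ) + emultiplicity ((2:ℕ):ℤ) (C:ℤ)
          ≤ emultiplicity ((2:ℕ):ℤ) (v ^ d' - 1) + emultiplicity ((2:ℕ):ℤ) (u ^ d - 1) :=
            add_le_add e2 (hCu.trans e1.le)
        _ = emultiplicity ((2:ℕ):ℤ) (u ^ d - 1) + emultiplicity ((2:ℕ):ℤ) (v ^ d' - 1) :=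
            add_comm _ _
    · have hpodd : Odd p := hp.odd_of_ne_two hp2
      have hpud : (p : ℤ) ∣ u ^ d - 1 := k_dvd hpu1 d
      have hpupow : ¬ (p : ℤ) ∣ u ^ d := by
        intro h2
        have h3 := dvd_sub h2 hpud
        rw [sub_sub_cancel] at h3
        exact hpZ.not_dvd_one h3
      have hpv : ¬ (p : ℤ) ∣ v := by
        intro h2
        have h3 := dvd_sub h2 hpv1
        rw [sub_sub_cancel] at h3
        exact hpZ.not_dvd_one h3
      have lte1 : emultiplicity (p : ℤ) (u ^ (d * d') - 1) =
          emultiplicity (p : ℤ) (u ^ d - 1) + emultiplicity p d' := by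
        have := Int.emultiplicity_pow_sub_pow hp hpodd (x := u ^ d) (y := 1)
          (by simpa using hpud) hpupow d'
        rw [pow_mul]
        simpa using this
      have lte2 : emultiplicity (p : ℤ) (v ^ d' - 1) =
          emultiplicity (p : ℤ) (v - 1) + emultiplicity p d' := by
        have := Int.emultiplicity_pow_sub_pow hp hpodd (x := v) (y := 1)
          (by simpa using hpv1) hpv d'
        simpa using this
      have ek : emultiplicity (p : ℤ) (k : ℤ) ≤ emultiplicity (p : ℤ) (v - 1) :=
        emultiplicity_le_emultiplicity_of_dvd_right hv
      have hCu' : emultiplicity (p : ℤ) (C : ℤ) ≤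
          emultiplicity (p : ℤ) (u ^ d - 1) + emultiplicity p d' := by
        rw [← lte1]; exact hCu
      rw [lte2]
      calc emultiplicity (p:ℤ) (k:ℤ) + emultiplicity (p:ℤ) (C:ℤ)
          ≤ emultiplicity (p:ℤ) (v - 1) + (emultiplicity (p:ℤ) (u ^ d - 1) + emultiplicity p d') :=
            add_le_add ek hCu'
        _ = emultiplicity (p:ℤ) (u ^ d - 1) + (emultiplicity (p:ℤ) (v - 1) + emultiplicity p d') := by
            ring
  · have h0k : emultiplicity (p : ℤ) ((k : ℕ) : ℤ) = 0 := emultiplicity_eq_zero.mpr hpk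
    have hcop : IsCoprime (p : ℤ) (k : ℤ) := by
      rw [Int.isCoprime_iff_gcd_eq_one]
      simpa using hp.coprime_iff_not_dvd.mpr (fun hdk => hpk (by exact_mod_cast hdk))
    obtain ⟨a, b, hab⟩ := hcop
    have hwk : (k : ℤ) ∣ (1 - b * k) - 1 := ⟨-b, by ring⟩
    have hpw : (p : ℤ) ∣ (1 - b * k) := ⟨a, by linarith⟩
    have hCw : (C : ℤ) ∣ (1 - b * k) ^ (d * d') - 1 := oo_dvd hwk
    have hnp : ¬ (p : ℤ) ∣ (C : ℤ) := by
      intro hpc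
      have h1 : (p : ℤ) ∣ (1 - b * k) ^ (d * d') - 1 := hpc.trans hCw
      have h2 : (p : ℤ) ∣ (1 - b * k) ^ (d * d') := dvd_pow hpw (Nat.mul_pos hd hd').ne'
      have h3 := dvd_sub h2 h1
      rw [sub_sub_cancel] at h3
      exact hpZ.not_dvd_one h3
    rw [h0k, emultiplicity_eq_zero.mpr hnp]
    simp

lemma dir2 {d d' k : ℕ} (hd : 0 < d) (hd' : 0 < d') (hk : 0 < k) (hodd : Odd d') :
    k * oo (d * d') k ∣ oo d k * oo d' k := by
  have hZ : ((k * oo (d * d') k : ℕ) : ℤ) ∣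
      (Submodule.IsPrincipal.generator (Ideal.span (S d k))) *
      (Submodule.IsPrincipal.generator (Ideal.span (S d' k))) := by
    have hmm : Submodule.IsPrincipal.generator (Ideal.span (S d k)) *
        Submodule.IsPrincipal.generator (Ideal.span (S d' k)) ∈
        Ideal.span (S d k) * Ideal.span (S d' k) :=
      Ideal.mul_mem_mul (Submodule.IsPrincipal.generator_mem _)
        (Submodule.IsPrincipal.generator_mem _)
    rw [Ideal.span_mul_span'] at hmm
    have hle : Ideal.span (S d k * S d' k) ≤
        Ideal.span {((k * oo (d * d') k : ℕ) : ℤ)} := by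
      rw [Ideal.span_le]
      rintro z hz
      obtain ⟨s, hs, t, ht, rfl⟩ := hz
      obtain ⟨u, hu, rfl⟩ := hs
      obtain ⟨v, hv, rfl⟩ := ht
      rw [SetLike.mem_coe, Ideal.mem_span_singleton]
      exact key hd hd' hk hodd hu hv
    exact Ideal.mem_span_singleton.mp (hle hmm)
  have h2 := Int.natAbs_dvd_natAbs.mpr hZ
  rw [Int.natAbs_mul, Int.natAbs_natCast] at h2
  exact h2

lemma dir1 {d d' k : ℕ} (hd : 0 < d) (hd' : 0 < d') (hk : 0 < k) (h : Nat.Coprime d d') :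
    oo d k * oo d' k ∣ k * oo (d * d') k := by
  set A := oo d k with hA
  set B := oo d' k with hB
  set g := Nat.gcd A B with hgdef
  have hApos : 0 < A := oo_pos hd hk
  haveI : NeZero g := ⟨fun h0 => hApos.ne' (Nat.eq_zero_of_gcd_eq_zero_left h0)⟩
  have hg : g ∣ k := by
    have h1 : (g : ℤ) ∣ (1 + (k : ℤ)) ^ d - 1 :=
      (Int.natCast_dvd_natCast.mpr (Nat.gcd_dvd_left A B)).trans (oo_dvd (by simp))
    have h2 : (g : ℤ) ∣ (1 + (k : ℤ)) ^ d' - 1 :=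
      (Int.natCast_dvd_natCast.mpr (Nat.gcd_dvd_right A B)).trans (oo_dvd (by simp))
    have hx1 : (1 + (k : ZMod g)) ^ d = 1 := by
      have h0 := (ZMod.intCast_zmod_eq_zero_iff_dvd ((1 + (k : ℤ)) ^ d - 1) g).mpr h1
      push_cast at h0
      exact sub_eq_zero.mp h0
    have hx2 : (1 + (k : ZMod g)) ^ d' = 1 := by
      have h0 := (ZMod.intCast_zmod_eq_zero_iff_dvd ((1 + (k : ℤ)) ^ d' - 1) g).mpr h2
      push_cast at h0
      exact sub_eq_zero.mp h0
    have ho : orderOf (1 + (k : ZMod g)) ∣ Nat.gcd d d' :=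
      Nat.dvd_gcd (orderOf_dvd_of_pow_eq_one hx1) (orderOf_dvd_of_pow_eq_one hx2)
    rw [Nat.Coprime.gcd_eq_one h] at ho
    have hxe : (1 + (k : ZMod g)) = 1 := orderOf_eq_one_iff.mp (Nat.dvd_one.mp ho)
    have hk0 : (k : ZMod g) = 0 := by
      have := hxe
      rwa [add_eq_left] at this
    exact (ZMod.natCast_eq_zero_iff k g).mp hk0
  have hlcm : Nat.lcm A B ∣ oo (d * d') k := by
    rw [← Int.natCast_dvd_natCast]
    apply dvd_oo
    intro u hu
    have hdvdA : (A : ℤ) ∣ u ^ (d * d') - 1 := by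
      have h0 := oo_dvd (d := d) (k := k) (u := u ^ d') (k_dvd hu d')
      rwa [← pow_mul, Nat.mul_comm] at h0
    have hdvdB : (B : ℤ) ∣ u ^ (d * d') - 1 := by
      have h0 := oo_dvd (d := d') (k := k) (u := u ^ d) (k_dvd hu d)
      rwa [← pow_mul] at h0
    have hA' : A ∣ (u ^ (d * d') - 1).natAbs :=
      Int.natCast_dvd_natCast.mp (Int.dvd_natAbs.mpr hdvdA)
    have hB' : B ∣ (u ^ (d * d') - 1).natAbs :=
      Int.natCast_dvd_natCast.mp (Int.dvd_natAbs.mpr hdvdB)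
    exact (Int.natCast_dvd_natCast.mpr (Nat.lcm_dvd hA' hB')).trans
      (Int.natAbs_dvd.mpr dvd_rfl)
  calc A * B = g * Nat.lcm A B := (Nat.gcd_mul_lcm A B).symm
    _ ∣ k * oo (d * d') k := mul_dvd_mul hg hlcm

lemma main {d d' k : ℕ} (hd : 0 < d) (hd' : 0 < d') (hk : 0 < k)
    (h : Nat.Coprime d d') (hodd : Odd d') :
    k * oo (d * d') k = oo d k * oo d' k :=
  Nat.dvd_antisymm (dir2 hd hd' hk hodd) (dir1 hd hd' hk h)

end OoAux

theorem stmt12 (d d' k : ℕ) (hd : 0 < d) (hd' : 0 < d') (hk : 0 < k)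
    (h : Nat.Coprime d d') : k * oo (d * d') k = oo d k * oo d' k := by
  rcases Nat.even_or_odd d' with he | ho
  · have hdodd : Odd d := by
      rcases Nat.even_or_odd d with he2 | ho2
      · exfalso
        have h1 : 2 ∣ Nat.gcd d d' :=
          Nat.dvd_gcd (even_iff_two_dvd.mp he2) (even_iff_two_dvd.mp he)
        rw [Nat.Coprime.gcd_eq_one h] at h1
        exact absurd h1 (by decide)
      · exact ho2
    rw [Nat.mul_comm d d', Nat.mul_comm (oo d k) (oo d' k)]
    exact OoAux.main hd' hd hk h.symm hdodd
  · exact OoAux.main hd hd' hk h ho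

end
end

section
/- Let k and s be positive integers and let p be a prime. If p is odd, then o_{p^s}(k) = k·gcd(p,k)^s. If p = 2, then o_{2^s}(k) = k·gcd(2,k)^{s−1}·gcd(4, 2+k). -/
open scoped DirectSum

noncomputable section


/-- binomial expansion up to cubic remainder -/
lemma cubic (n : ℕ) (x : ℤ) :
    ∃ H : ℤ, (1 + x) ^ n = 1 + n * x + (n.choose 2) * x ^ 2 + x ^ 3 * H := by
  induction n with
  | zero => exact ⟨0, by norm_num⟩
  | succ n ih =>
    obtain ⟨H, hH⟩ := ih
    refine ⟨H + n.choose 2 + x * H, ?_⟩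
    rw [pow_succ, hH]
    have : (n + 1).choose 2 = n.choose 1 + n.choose 2 := Nat.choose_succ_succ n 1
    rw [this, Nat.choose_one_right]
    push_cast
    ring

/-- odd prime power step -/
lemma step_odd (p : ℕ) (hp : p.Prime) (hodd : Odd p) (K M c : ℤ)
    (hKM : K ∣ M) (hpM : (p : ℤ) ∣ M) :
    ∃ D : ℤ, (1 + M * c) ^ p = 1 + p * M * (c + D) ∧ K ∣ p * D ∧ (p : ℤ) ∣ D := by
  have hp2 : (p : ℤ) ∣ (p.choose 2 : ℤ) :=
    Int.natCast_dvd_natCast.mpr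
      (hp.dvd_choose_self (by norm_num) (by
        rcases hodd with ⟨t, ht⟩
        have := hp.two_le
        omega))
  obtain ⟨M₂, rfl⟩ := hpM
  obtain ⟨c2q, hc2q⟩ := hp2
  obtain ⟨M₁, hM1⟩ := hKM
  obtain ⟨H, hH⟩ := cubic p ((p : ℤ) * M₂ * c)
  refine ⟨c2q * ((p:ℤ) * M₂) * c ^ 2 + M₂ * ((p:ℤ) * M₂) * c ^ 3 * H, ?_, ?_, ?_⟩
  · rw [hH]
    linear_combination ((p:ℤ) * M₂ * c)^2 * hc2q
  · refine ⟨M₁ * ((p.choose 2 : ℤ) * c ^ 2 + (p:ℤ) * M₂ * c ^ 3 * H), ?_⟩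
    linear_combination (-(p:ℤ) * M₂ * c^2) * hc2q
      + ((p.choose 2 : ℤ) * c ^ 2 + (p:ℤ) * M₂ * c ^ 3 * H) * hM1
  · exact ⟨c2q * M₂ * c ^ 2 + M₂ * M₂ * c ^ 3 * H, by ring⟩

/-- p = 2 step -/
lemma step_two (K M c : ℤ) (hKM : K ∣ M) (h4 : (4 : ℤ) ∣ M) :
    ∃ D : ℤ, (1 + M * c) ^ 2 = 1 + 2 * M * (c + D) ∧ K ∣ 2 * D ∧ (2 : ℤ) ∣ D := by
  obtain ⟨M₄, rfl⟩ := h4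
  obtain ⟨M₁, hM1⟩ := hKM
  refine ⟨2 * M₄ * c ^ 2, ?_, ⟨M₁ * c ^ 2, ?_⟩, ⟨M₄ * c ^ 2, by ring⟩⟩
  · ring
  · linear_combination (c^2) * hM1

/-- combined step -/
lemma step_all (p : ℕ) (hp : p.Prime) (K M c : ℤ) (hKM : K ∣ M) (hpK : (p : ℤ) ∣ K)
    (h4 : p = 2 → (4 : ℤ) ∣ M) :
    ∃ D : ℤ, (1 + M * c) ^ p = 1 + p * M * (c + D) ∧ K ∣ p * D ∧ (p : ℤ) ∣ D := by
  rcases eq_or_ne p 2 with h2 | h2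
  · subst h2
    obtain ⟨D, h1, h2, h3⟩ := step_two K M c hKM (h4 rfl)
    exact ⟨D, by exact_mod_cast h1, by exact_mod_cast h2, by exact_mod_cast h3⟩
  · exact step_odd p hp (hp.odd_of_ne_two h2) K M c hKM (hpK.trans hKM)

/-- iterated step -/
lemma iter (p : ℕ) (hp : p.Prime) (K M c : ℤ) (hKM : K ∣ M) (hpK : (p : ℤ) ∣ K)
    (h4 : p = 2 → (4 : ℤ) ∣ M) (s : ℕ) :
    ∃ c' : ℤ, (1 + M * c) ^ p ^ s = 1 + p ^ s * M * c' ∧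
      ∀ q : ℤ, Prime q → q ∣ K → q ∣ c' - c := by
  induction s with
  | zero => exact ⟨c, by norm_num, fun q _ _ => by simp⟩
  | succ s ih =>
    obtain ⟨c₁, hc₁, hq₁⟩ := ih
    have hKM' : K ∣ (p : ℤ) ^ s * M := hKM.mul_left _
    have h4' : p = 2 → (4 : ℤ) ∣ (p : ℤ) ^ s * M := fun h => (h4 h).mul_left _
    obtain ⟨D, hD1, hD2, hD3⟩ := step_all p hp K ((p : ℤ) ^ s * M) c₁ hKM' hpK h4'
    refine ⟨c₁ + D, ?_, ?_⟩
    · rw [pow_succ, pow_mul, hc₁, hD1]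
      push_cast
      ring
    · intro q hq hqK
      have hD : q ∣ D := by
        rcases hq.dvd_mul.mp (hqK.trans hD2) with h | h
        · exact (h.trans hD3)
        · exact h
      have := hq₁ q hq hqK
      have h2 : q ∣ (c₁ - c) + D := dvd_add this hD
      have he : c₁ + D - c = (c₁ - c) + D := by ring
      rw [he]
      exact h2


/-- p ∣ sum of p powers of something ≡ 1 mod p -/
lemma dvd_geom (p : ℕ) (v : ℤ) (hv : (p : ℤ) ∣ v - 1) :
    (p : ℤ) ∣ ∑ i ∈ Finset.range p, v ^ i := by
  have hv1 : (v : ZMod p) = 1 := by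
    have := (ZMod.intCast_zmod_eq_zero_iff_dvd (v - 1) p).mpr hv
    push_cast at this
    linear_combination this
  have : ((∑ i ∈ Finset.range p, v ^ i : ℤ) : ZMod p) = 0 := by
    push_cast [hv1]
    simp [ZMod.natCast_self]
  exact (ZMod.intCast_zmod_eq_zero_iff_dvd _ p).mp this

/-- upper bound: K * p^s divides u^(p^s) - 1 -/
lemma upperA (p : ℕ) (K u : ℤ) (hpK : (p : ℤ) ∣ K) (hKu : K ∣ u - 1) (s : ℕ) :
    K * (p : ℤ) ^ s ∣ u ^ p ^ s - 1 := by
  induction s with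
  | zero => simpa using hKu
  | succ s ih =>
    have hstep : u ^ p ^ (s + 1) - 1 =
        (∑ i ∈ Finset.range p, (u ^ p ^ s) ^ i) * (u ^ p ^ s - 1) := by
      rw [geom_sum_mul, ← pow_mul, ← pow_succ]
    rw [hstep]
    have hpv : (p : ℤ) ∣ u ^ p ^ s - 1 := by
      refine dvd_trans ?_ ih
      exact Dvd.dvd.mul_right hpK _
    have hg : (p : ℤ) ∣ ∑ i ∈ Finset.range p, (u ^ p ^ s) ^ i := dvd_geom p _ hpv
    obtain ⟨a, ha⟩ := hg
    obtain ⟨b, hb⟩ := ih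
    refine ⟨a * b, ?_⟩
    rw [ha, hb, pow_succ]
    ring

/-- the main combining lemma -/
lemma oo_eq (d k M : ℕ) (hd : 0 < d) (hk : 0 < k)
    (h1 : ∀ u : ℤ, (k : ℤ) ∣ u - 1 → (M : ℤ) ∣ u ^ d - 1)
    (h2 : ∃ u c : ℤ, (k : ℤ) ∣ u - 1 ∧ u ^ d - 1 = (M : ℤ) * c ∧
      ∀ q : ℕ, q.Prime → (q : ℤ) ∣ c → ¬ (q : ℤ) ∣ (k : ℤ)) :
    oo d k = M := by
  set S : Set ℤ := {z : ℤ | ∃ u : ℤ, (k : ℤ) ∣ (u - 1) ∧ z = u ^ d - 1} with hS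
  set I : Ideal ℤ := Ideal.span S with hI
  set g : ℤ := Submodule.IsPrincipal.generator I with hg
  have hoo : oo d k = g.natAbs := rfl
  -- g divides every member of S
  have hgen : ∀ z ∈ S, g ∣ z := by
    intro z hz
    have hzI : z ∈ I := Ideal.subset_span hz
    rw [← Ideal.span_singleton_generator I] at hzI
    exact Ideal.mem_span_singleton.mp hzI
  -- M divides g
  have hMg : (M : ℤ) ∣ g := by
    have hle : I ≤ Ideal.span {(M : ℤ)} := by
      rw [hI, Ideal.span_le]
      rintro z ⟨u, hu, rfl⟩
      exact Ideal.mem_span_singleton.mpr (h1 u hu)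
    exact Ideal.mem_span_singleton.mp (hle (Submodule.IsPrincipal.generator_mem I))
  -- every prime dividing g divides k
  have hprime : ∀ q : ℕ, q.Prime → (q : ℤ) ∣ g → (q : ℤ) ∣ (k : ℤ) := by
    intro q hq hqg
    by_contra hqk
    have hcop : IsCoprime (q : ℤ) (k : ℤ) := by
      rw [Int.isCoprime_iff_gcd_eq_one]
      have : Nat.Coprime q k := (hq.coprime_iff_not_dvd).mpr
        (fun h => hqk (Int.natCast_dvd_natCast.mpr h))
      simpa [Int.gcd] using this
    obtain ⟨a, b, hab⟩ := hcop
    -- a*q + b*k = 1, take u := a*q = 1 - b*k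
    set u : ℤ := a * q with hu
    have hku : (k : ℤ) ∣ u - 1 := ⟨-b, by linarith [hab]⟩
    have hgu : g ∣ u ^ d - 1 := hgen _ ⟨u, hku, rfl⟩
    have hq1 : (q : ℤ) ∣ 1 := by
      have h1' : (q : ℤ) ∣ u ^ d := dvd_pow ⟨a, mul_comm a q⟩ hd.ne'
      have h2' : (q : ℤ) ∣ u ^ d - 1 := hqg.trans hgu
      have := dvd_sub h1' h2'
      simpa using this
    have := Int.le_of_dvd one_pos hq1
    have := hq.two_le
    omega
  obtain ⟨u, c, hu, huc, hc⟩ := h2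
  have hgMc : g ∣ (M : ℤ) * c := huc ▸ hgen _ ⟨u, hu, rfl⟩
  have hcop : IsCoprime g c := by
    rw [Int.isCoprime_iff_gcd_eq_one]
    by_contra hne
    obtain ⟨q, hq, hq1, hq2⟩ := Nat.Prime.not_coprime_iff_dvd.mp hne
    have hqg : (q : ℤ) ∣ g := by
      rw [← Int.natAbs_dvd_natAbs]
      simpa using hq1
    have hqc : (q : ℤ) ∣ c := by
      rw [← Int.natAbs_dvd_natAbs]
      simpa using hq2
    exact hc q hq hqc (hprime q hq hqg)
  have hgM : g ∣ (M : ℤ) := hcop.dvd_of_dvd_mul_right hgMc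
  rw [hoo]
  refine Nat.dvd_antisymm ?_ ?_
  · have := Int.natAbs_dvd_natAbs.mpr hgM
    simpa using this
  · have := Int.natAbs_dvd_natAbs.mpr hMg
    simpa using this

/-- Case: d coprime to k -/
lemma case_coprime (d k : ℕ) (hd : 0 < d) (hk : 0 < k) (hcop : Nat.Coprime d k) :
    oo d k = k := by
  refine oo_eq d k k hd hk ?_ ?_
  · intro u hu
    have := sub_dvd_pow_sub_pow u 1 d
    simpa using hu.trans (by simpa using this)
  · refine ⟨1 + (k : ℤ), ∑ i ∈ Finset.range d, (1 + (k : ℤ)) ^ i, by simp, ?_, ?_⟩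
    · have := geom_sum_mul (1 + (k : ℤ)) d
      simp only [add_sub_cancel_left] at this
      rw [← this]; ring
    · intro q hq hqc hqk
      set u : ℤ := 1 + (k : ℤ) with hu
      have hkd : (k : ℤ) ∣ (∑ i ∈ Finset.range d, u ^ i) - d := by
        have : (∑ i ∈ Finset.range d, u ^ i) - d = ∑ i ∈ Finset.range d, (u ^ i - 1) := by
          rw [Finset.sum_sub_distrib]
          simp
        rw [this]
        refine Finset.dvd_sum fun i _ => ?_
        have h3 : u - 1 ∣ u ^ i - 1 := by simpa using sub_dvd_pow_sub_pow u 1 i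
        have h4 : (k : ℤ) ∣ u - 1 := by simp [hu]
        exact h4.trans h3
      have hqd : (q : ℤ) ∣ (d : ℤ) := by
        have h2 : (q : ℤ) ∣ (∑ i ∈ Finset.range d, u ^ i) - d := hqk.trans hkd
        have := dvd_sub hqc h2
        simpa using this
      have hqdn : q ∣ d := Int.natCast_dvd_natCast.mp hqd
      have hqkn : q ∣ k := Int.natCast_dvd_natCast.mp hqk
      have : q ∣ Nat.gcd d k := Nat.dvd_gcd hqdn hqkn
      rw [hcop] at this
      exact hq.one_lt.ne' (Nat.eq_one_of_dvd_one this).symm.symm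
/-- Case: p ∣ k (and 4 ∣ k if p = 2) -/
lemma case_dvd (p s k : ℕ) (hp : p.Prime) (hk : 0 < k) (hpk : p ∣ k)
    (h4 : p = 2 → 4 ∣ k) : oo (p ^ s) k = k * p ^ s := by
  have hpkZ : (p : ℤ) ∣ (k : ℤ) := Int.natCast_dvd_natCast.mpr hpk
  refine oo_eq (p ^ s) k (k * p ^ s) (pow_pos hp.pos s) hk ?_ ?_
  · intro u hu
    have := upperA p (k : ℤ) u hpkZ hu s
    have hcast : ((k * p ^ s : ℕ) : ℤ) = (k : ℤ) * (p : ℤ) ^ s := by push_cast; ring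
    rwa [hcast]
  · have h4Z : p = 2 → (4 : ℤ) ∣ (k : ℤ) := fun h =>
      Int.natCast_dvd_natCast.mpr (by exact_mod_cast h4 h)
    obtain ⟨c', hc', hq'⟩ := iter p hp (k : ℤ) (k : ℤ) 1 dvd_rfl hpkZ h4Z s
    refine ⟨1 + (k : ℤ), c', by simp, ?_, ?_⟩
    · have : (1 + (k : ℤ) * 1) = 1 + (k : ℤ) := by ring
      rw [← this, hc']
      push_cast
      ring
    · intro q hq hqc hqk
      have hqZ : Prime (q : ℤ) := Nat.prime_iff_prime_int.mp hq
      have h1 : (q : ℤ) ∣ c' - 1 := hq' _ hqZ hqk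
      have : (q : ℤ) ∣ 1 := by
        have := dvd_sub hqc h1
        simpa using this
      have := Int.le_of_dvd one_pos this
      have := hq.two_le
      omega
/-- Case: k ≡ 2 mod 4, p = 2 -/
lemma case_two_mod (s k a : ℕ) (hs : 0 < s) (hk : k = 2 * (2 * a + 1)) :
    oo (2 ^ s) k = k * 2 ^ (s - 1) * 4 := by
  obtain ⟨s', rfl⟩ : ∃ s', s = s' + 1 := ⟨s - 1, by omega⟩
  set A : ℤ := (a : ℤ) with hA
  set N : ℤ := 2 * A + 1 with hN
  have kZ : (k : ℤ) = 2 * N := by rw [hk]; push_cast; ring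
  have hNk : N ∣ (k : ℤ) := ⟨2, by rw [kZ]; ring⟩
  have hqone : ∀ q : ℕ, q.Prime → (q : ℤ) ∣ 1 → False := by
    intro q hq h
    have := Int.le_of_dvd one_pos h
    have := hq.two_le
    omega
  have hMcast : ((k * 2 ^ (s' + 1 - 1) * 4 : ℕ) : ℤ) = 2 ^ s' * (8 * N) := by
    push_cast
    rw [kZ]
    ring
  refine oo_eq (2 ^ (s' + 1)) k (k * 2 ^ (s' + 1 - 1) * 4) (by positivity) (by omega) ?_ ?_
  · intro u hu
    -- 4k = 8N divides u^2 - 1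
    have h2u : (2 : ℤ) ∣ u - 1 := dvd_trans ⟨N, kZ⟩ hu
    obtain ⟨mm, hmm⟩ := h2u
    obtain ⟨e, he⟩ := Int.even_mul_succ_self mm
    have h8 : (8 : ℤ) ∣ u ^ 2 - 1 := ⟨e, by linear_combination (u + 1 + 2 * mm) * hmm + 4 * he⟩
    have hNd : N ∣ u ^ 2 - 1 := by
      have h3 : u - 1 ∣ u ^ 2 - 1 := by simpa using sub_dvd_pow_sub_pow u 1 2
      exact (hNk.trans hu).trans h3
    have hcop : IsCoprime (8 : ℤ) N := by
      have h2N : ¬ (2 : ℤ) ∣ N := by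
        rintro ⟨b, hb⟩
        omega
      have := (Int.prime_two.irreducible.coprime_iff_not_dvd).mpr h2N
      have h3 : IsCoprime ((2 : ℤ) ^ 3) N := this.pow_left
      norm_num at h3
      exact h3
    have h8N : (8 * N : ℤ) ∣ u ^ 2 - 1 := hcop.mul_dvd h8 hNd
    have := upperA 2 (8 * N) (u ^ 2) ⟨4 * N, by ring⟩ h8N s'
    rw [hMcast]
    have hpow : (u ^ 2) ^ 2 ^ s' = u ^ 2 ^ (s' + 1) := by
      rw [← pow_mul, pow_succ]
      ring_nf
    rw [hpow] at this
    have : (2 : ℤ) ^ s' * (8 * N) ∣ u ^ 2 ^ (s' + 1) - 1 := by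
      obtain ⟨b, hb⟩ := this
      exact ⟨b, by push_cast at hb ⊢; linarith⟩
    exact this
  · set t : ℤ := 1 - 2 * A - 4 * A ^ 2 with ht
    set w : ℤ := 1 - 4 * A ^ 2 - 4 * A ^ 3 with hw
    set u : ℤ := 1 + 2 * N * t with hu
    have base : u ^ 2 = 1 + (8 * N) * (t * w) := by
      rw [hu, hN, ht, hw]; ring
    obtain ⟨c', hc', hq'⟩ := iter 2 Nat.prime_two (8 * N) (8 * N) (t * w)
      dvd_rfl ⟨4 * N, by ring⟩ (fun _ => ⟨2 * N, by ring⟩) s'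
    refine ⟨u, c', ⟨t, by rw [hu, kZ]; ring⟩, ?_, ?_⟩
    · rw [hMcast]
      have hpow : u ^ 2 ^ (s' + 1) = (u ^ 2) ^ 2 ^ s' := by
        rw [← pow_mul, pow_succ]; ring_nf
      rw [hpow, base, hc']
      push_cast
      ring
    · intro q hq hqc hqk
      have hqZ : Prime (q : ℤ) := Nat.prime_iff_prime_int.mp hq
      have hq8N : (q : ℤ) ∣ 8 * N := by
        have h2N : (q : ℤ) ∣ 2 * N := kZ ▸ hqk
        obtain ⟨b, hb⟩ := h2N
        exact ⟨4 * b, by linear_combination 4 * hb⟩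
      have hdm : (q : ℤ) ∣ t * w := by
        have h1 := hq' _ hqZ hq8N
        have := dvd_sub hqc h1
        simpa using this
      have hqk' : q ∣ k := Int.natCast_dvd_natCast.mp hqk
      rw [hk] at hqk'
      rcases (Nat.Prime.dvd_mul hq).mp hqk' with hq2 | hqn
      · have hq2' : q = 2 := (Nat.prime_dvd_prime_iff_eq hq Nat.prime_two).mp hq2
        subst hq2'
        rcases hqZ.dvd_mul.mp hdm with hT | hW
        · push_cast at hT
          have e1 : t - 2 * (-A - 2 * A ^ 2) = 1 := by rw [ht]; ring
          have : (2 : ℤ) ∣ 1 := by rw [← e1]; exact dvd_sub hT (dvd_mul_right _ _)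
          norm_num at this
        · push_cast at hW
          have e1 : w - 2 * (-2 * A ^ 2 - 2 * A ^ 3) = 1 := by rw [hw]; ring
          have : (2 : ℤ) ∣ 1 := by rw [← e1]; exact dvd_sub hW (dvd_mul_right _ _)
          norm_num at this
      · have hqN : (q : ℤ) ∣ N := by
          have := Int.natCast_dvd_natCast.mpr hqn
          have e2 : ((2 * a + 1 : ℕ) : ℤ) = N := by rw [hN, hA]; push_cast; ring
          rwa [e2] at this
        rcases hqZ.dvd_mul.mp hdm with hT | hW
        · have e1 : t - N * (1 - N) = 1 := by rw [ht, hN]; ring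
          exact hqone q hq (by rw [← e1]; exact dvd_sub hT (hqN.mul_right _))
        · have e1 : 2 * w - N * t = 1 := by rw [hw, ht, hN]; ring
          exact hqone q hq (by rw [← e1]; exact dvd_sub (hW.mul_left 2) (hqN.mul_right t))

theorem stmt13 (k s p : ℕ) (hk : 0 < k) (hs : 0 < s) (hp : p.Prime) :
    (Odd p → oo (p ^ s) k = k * Nat.gcd p k ^ s) ∧
      (p = 2 → oo (2 ^ s) k = k * Nat.gcd 2 k ^ (s - 1) * Nat.gcd 4 (2 + k)) := by
  constructor
  · intro hodd
    have hp2 : p ≠ 2 := by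
      rintro rfl
      rcases hodd with ⟨t, ht⟩
      omega
    by_cases hdvd : p ∣ k
    · rw [Nat.gcd_eq_left hdvd]
      exact case_dvd p s k hp hk hdvd (fun h => absurd h hp2)
    · have hcop : Nat.Coprime p k := (hp.coprime_iff_not_dvd).mpr hdvd
      have hg : Nat.gcd p k = 1 := hcop
      rw [hg, one_pow, mul_one]
      exact case_coprime (p ^ s) k (pow_pos hp.pos s) hk (Nat.Coprime.pow_left s hcop)
  · rintro rfl
    rcases (by omega : k % 2 = 1 ∨ k % 4 = 0 ∨ k % 4 = 2) with h | h | h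
    · have hcop2 : ¬ 2 ∣ k := by omega
      have hcop : Nat.Coprime 2 k := (Nat.prime_two.coprime_iff_not_dvd).mpr hcop2
      have hg2 : Nat.gcd 2 k = 1 := hcop
      have hg4 : Nat.gcd 4 (2 + k) = 1 := by
        have hnd : ¬ 2 ∣ (2 + k) := by omega
        have h1 : Nat.Coprime (2 ^ 2) (2 + k) :=
          Nat.Coprime.pow_left 2 ((Nat.prime_two.coprime_iff_not_dvd).mpr hnd)
        have h2 : (2 : ℕ) ^ 2 = 4 := by norm_num
        rw [h2] at h1
        exact h1
      rw [hg2, hg4, one_pow, mul_one, mul_one]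
      exact case_coprime (2 ^ s) k (by positivity) hk (Nat.Coprime.pow_left s hcop)
    · have h4 : 4 ∣ k := by omega
      have h2k : 2 ∣ k := by omega
      have hg2 : Nat.gcd 2 k = 2 := Nat.gcd_eq_left h2k
      have hg4 : Nat.gcd 4 (2 + k) = 2 := by
        obtain ⟨j, rfl⟩ := h4
        rw [show 2 + 4 * j = 2 + j * 4 by ring]
        rw [Nat.gcd_add_mul_right_right 4 2 j]
        decide
      rw [hg2, hg4]
      have hcd := case_dvd 2 s k Nat.prime_two hk h2k (fun _ => h4)
      rw [hcd]
      obtain ⟨s', rfl⟩ : ∃ s', s = s' + 1 := ⟨s - 1, by omega⟩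
      simp [pow_succ]
      ring
    · obtain ⟨a, ha⟩ : ∃ a, k = 2 * (2 * a + 1) := ⟨(k - 2) / 4, by omega⟩
      have hg2 : Nat.gcd 2 k = 2 := Nat.gcd_eq_left (by omega)
      have hg4 : Nat.gcd 4 (2 + k) = 4 := Nat.gcd_eq_left (by omega)
      rw [hg2, hg4]
      exact case_two_mod s k a hs ha

end
end

section
/- Let G be a finite abelian group. Then there is an isomorphism of abelian groups Hmg^1(G, ℚ/ℤ) ≅ ⊕_C Hom(C, ℚ/ℤ), where the direct sum runs over all cyclic subgroups C of G and Hom(C, ℚ/ℤ) denotes the group of homomorphisms from C to ℚ/ℤ (the Pontryagin dual of C). -/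
open scoped DirectSum

noncomputable section

section Aux

open AddSubgroup Function

variable {G : Type*} [AddCommGroup G]

lemma aux_transport (φ : ∀ C : {C : AddSubgroup G // IsAddCyclic C}, C.1 →+ QZ)
    {C D : {C : AddSubgroup G // IsAddCyclic C}} (h : C.1 = D.1) (x : G)
    (hx : x ∈ C.1) (hx' : x ∈ D.1) :
    φ C ⟨x, hx⟩ = φ D ⟨x, hx'⟩ := by
  have hCD : C = D := Subtype.ext h
  subst hCD
  rfl

lemma aux_isAddCyclic_zmultiples (x : G) : IsAddCyclic (zmultiples x) := by
  refine ⟨⟨x, mem_zmultiples x⟩, ?_⟩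
  rintro ⟨y, hy⟩
  obtain ⟨k, hk⟩ := mem_zmultiples_iff.mp hy
  exact ⟨k, Subtype.ext (by simpa using hk)⟩

lemma aux_exists_gen (C : AddSubgroup G) (hC : IsAddCyclic C) :
    ∃ g : G, g ∈ C ∧ zmultiples g = C := by
  obtain ⟨σ, hσ⟩ := hC.exists_zsmul_surjective
  refine ⟨(σ : G), σ.2, le_antisymm (zmultiples_le_of_mem σ.2) ?_⟩
  intro x hx
  obtain ⟨k, hk⟩ := hσ ⟨x, hx⟩
  exact mem_zmultiples_iff.mpr ⟨k, by simpa using congrArg Subtype.val hk⟩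

lemma aux_zmultiples_smul (x : G) (n : ℤ) (h : IsCoprime n (addOrderOf x : ℤ)) :
    zmultiples (n • x) = zmultiples x := by
  refine le_antisymm (zmultiples_le_of_mem (mem_zmultiples_iff.mpr ⟨n, rfl⟩))
    (zmultiples_le_of_mem (mem_zmultiples_iff.mpr ?_))
  obtain ⟨a, b, hab⟩ := h
  have hm : (addOrderOf x : ℤ) • x = 0 := by
    rw [natCast_zsmul]; exact addOrderOf_nsmul_eq_zero x
  refine ⟨a, ?_⟩
  calc a • n • x = (a * n) • x := (mul_zsmul x a n).symm
    _ = (1 - b * (addOrderOf x : ℤ)) • x := by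
        rw [show (a * n : ℤ) = 1 - b * (addOrderOf x : ℤ) by linarith]
    _ = x := by rw [sub_zsmul, one_zsmul, mul_zsmul, hm, smul_zero]; simp

lemma aux_torsion [Finite G] {f : G → QZ} (hf : f ∈ Hmg 1 G QZ) (x : G) :
    (addOrderOf x : ℤ) • f x = 0 := by
  have hcop : IsCoprime ((addOrderOf x : ℤ) + 1) (addOrderOf x : ℤ) :=
    ⟨1, -1, by ring⟩
  have h := hf x ((addOrderOf x : ℤ) + 1) hcop
  have h1 : ((addOrderOf x : ℤ) + 1) • x = x := by
    rw [add_zsmul, one_zsmul, natCast_zsmul, addOrderOf_nsmul_eq_zero, zero_add]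
  rw [h1, pow_one, add_zsmul, one_zsmul] at h
  exact add_eq_right.mp h.symm

lemma aux_coprime [Finite G] {g x : G} {k : ℤ} (hx : x = k • g)
    (hord : addOrderOf x = addOrderOf g) : IsCoprime k (addOrderOf g : ℤ) := by
  rw [Int.isCoprime_iff_gcd_eq_one]
  have hm0 : (addOrderOf g : ℤ) ≠ 0 := by
    exact_mod_cast (addOrderOf_pos g).ne'
  obtain ⟨a, ha⟩ := Int.gcd_dvd_left (a := k) (b := (addOrderOf g : ℤ))
  obtain ⟨b, hb⟩ := Int.gcd_dvd_right (a := k) (b := (addOrderOf g : ℤ))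
  have hmg : (addOrderOf g : ℤ) • g = 0 := by
    rw [natCast_zsmul]; exact addOrderOf_nsmul_eq_zero g
  have hbx : b • x = 0 := by
    have hbk : (b * k : ℤ) = a * (addOrderOf g : ℤ) := by
      linear_combination b * ha - a * hb
    rw [hx, ← mul_zsmul, hbk, mul_zsmul, hmg, smul_zero]
  have hdvd : (addOrderOf g : ℤ) ∣ b := by
    rw [← hord]
    exact addOrderOf_dvd_iff_zsmul_eq_zero.mpr hbx
  obtain ⟨c, hc⟩ := hdvd
  have h1 : (addOrderOf g : ℤ) * 1 = (addOrderOf g : ℤ) * (c * (Int.gcd k (addOrderOf g : ℤ) : ℤ)) := by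
    rw [mul_one]
    calc (addOrderOf g : ℤ) = (Int.gcd k (addOrderOf g : ℤ) : ℤ) * b := hb
      _ = _ := by rw [hc]; ring
  have h2 := mul_left_cancel₀ hm0 h1
  have h3 : (Int.gcd k (addOrderOf g : ℤ) : ℤ) ∣ 1 := ⟨c, by linear_combination h2⟩
  exact Nat.dvd_one.mp (Int.ofNat_dvd.mp (by exact_mod_cast h3))

lemma aux_hom [Finite G] {f : G → QZ} (hf : f ∈ Hmg 1 G QZ) (C : AddSubgroup G)
    (hC : IsAddCyclic C) :
    ∃ ψ : C →+ QZ, ∀ (x : G) (hx : x ∈ C), zmultiples x = C → ψ ⟨x, hx⟩ = f x := by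
  obtain ⟨g, hgC, hg⟩ := aux_exists_gen C hC
  set m := addOrderOf g with hmdef
  haveI : NeZero m := ⟨(addOrderOf_pos g).ne'⟩
  have hLmem : (zmultiplesHom C ⟨g, hgC⟩) (m : ℤ) = 0 := by
    refine Subtype.ext ?_
    simpa [natCast_zsmul, hmdef] using addOrderOf_nsmul_eq_zero g
  set L := ZMod.lift m ⟨zmultiplesHom C ⟨g, hgC⟩, hLmem⟩ with hL
  have hLsurj : Surjective L := by
    rintro ⟨x, hx⟩
    obtain ⟨k, hk⟩ := mem_zmultiples_iff.mp (hg ▸ hx)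
    exact ⟨((k : ℤ) : ZMod m), by
      rw [hL, ZMod.lift_coe]; exact Subtype.ext (by simpa using hk)⟩
  have hLbij : Bijective L := (Nat.bijective_iff_surjective_and_card L).mpr
    ⟨hLsurj, by rw [Nat.card_zmod, ← hg, Nat.card_zmultiples]⟩
  set e := AddEquiv.ofBijective L hLbij with he
  have h0 : (zmultiplesHom QZ (f g)) (m : ℤ) = 0 := by
    simpa using aux_torsion hf g
  refine ⟨(ZMod.lift m ⟨zmultiplesHom QZ (f g), h0⟩).comp e.symm.toAddMonoidHom, ?_⟩
  intro x hx hxC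
  obtain ⟨k, hk⟩ := mem_zmultiples_iff.mp (hg ▸ hx)
  have heval : e ((k : ℤ) : ZMod m) = ⟨x, hx⟩ := by
    show L ((k : ℤ) : ZMod m) = _
    rw [hL, ZMod.lift_coe]
    exact Subtype.ext (by simpa using hk)
  have hsymm : e.symm ⟨x, hx⟩ = ((k : ℤ) : ZMod m) := by
    rw [← heval, AddEquiv.symm_apply_apply]
  have hord : addOrderOf x = m := by
    rw [← Nat.card_zmultiples x, hxC, ← hg, Nat.card_zmultiples]
  have hcop : IsCoprime k (m : ℤ) := aux_coprime hk.symm hord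
  have hval : (ZMod.lift m ⟨zmultiplesHom QZ (f g), h0⟩).comp e.symm.toAddMonoidHom ⟨x, hx⟩
      = k • f g := by
    simp only [AddMonoidHom.comp_apply, AddEquiv.toAddMonoidHom_eq_coe,
      AddMonoidHom.coe_coe, hsymm, ZMod.lift_coe]
    rfl
  rw [hval, ← hk, hf g k (hmdef ▸ hcop), pow_one]

lemma aux_hom_ext {C : AddSubgroup G} {g : G} (hgC : g ∈ C) (hg : zmultiples g = C)
    {ψ χ : C →+ QZ} (h : ψ ⟨g, hgC⟩ = χ ⟨g, hgC⟩) : ψ = χ := by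
  ext x
  obtain ⟨x, hx⟩ := x
  obtain ⟨k, hk⟩ := mem_zmultiples_iff.mp (hg ▸ hx)
  have hxk : (⟨x, hx⟩ : C) = k • (⟨g, hgC⟩ : C) := Subtype.ext (by simpa using hk.symm)
  rw [hxk, map_zsmul, map_zsmul, h]

end Aux

theorem stmt17 (G : Type*) [AddCommGroup G] [Finite G] :
    Nonempty ((Hmg 1 G QZ) ≃+
      ⨁ C : {C : AddSubgroup G // IsAddCyclic C}, (C.1 →+ QZ)) := by
  classical
  open AddSubgroup Function in
  haveI : Finite (AddSubgroup G) :=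
    Finite.of_injective (fun C : AddSubgroup G => (C : Set G)) SetLike.coe_injective
  haveI : Fintype {C : AddSubgroup G // IsAddCyclic C} := Fintype.ofFinite _
  set Idx := {C : AddSubgroup G // IsAddCyclic C} with hIdx
  -- the underlying map
  let Ψfun : (∀ C : Idx, C.1 →+ QZ) → (G → QZ) := fun φ x =>
    φ ⟨zmultiples x, aux_isAddCyclic_zmultiples x⟩ ⟨x, mem_zmultiples x⟩
  have hmem : ∀ φ, Ψfun φ ∈ Hmg 1 G QZ := by
    intro φ x n hn
    have hz : zmultiples (n • x) = zmultiples x := aux_zmultiples_smul x n hn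
    show φ ⟨zmultiples (n • x), _⟩ ⟨n • x, _⟩ = n ^ 1 • φ ⟨zmultiples x, _⟩ ⟨x, _⟩
    rw [aux_transport φ (show (⟨zmultiples (n • x), aux_isAddCyclic_zmultiples _⟩ : Idx).1 =
        (⟨zmultiples x, aux_isAddCyclic_zmultiples x⟩ : Idx).1 from hz) (n • x)
        (mem_zmultiples _) (mem_zmultiples_iff.mpr ⟨n, rfl⟩)]
    have hxk : (⟨n • x, mem_zmultiples_iff.mpr ⟨n, rfl⟩⟩ : zmultiples x)
        = n • (⟨x, mem_zmultiples x⟩ : zmultiples x) := Subtype.ext (by simp)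
    rw [hxk, map_zsmul, pow_one]
  let Ψ : (∀ C : Idx, C.1 →+ QZ) →+ (Hmg 1 G QZ) :=
    { toFun := fun φ => ⟨Ψfun φ, hmem φ⟩
      map_zero' := rfl
      map_add' := fun φ ψ => rfl }
  have hinj : Injective Ψ := by
    intro φ φ' h
    funext C
    obtain ⟨g, hgC, hg⟩ := aux_exists_gen C.1 C.2
    refine aux_hom_ext hgC hg ?_
    have h1 : φ C ⟨g, hgC⟩ = φ ⟨zmultiples g, aux_isAddCyclic_zmultiples g⟩
        ⟨g, mem_zmultiples g⟩ := aux_transport φ hg.symm g hgC (mem_zmultiples g)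
    have h2 : φ' C ⟨g, hgC⟩ = φ' ⟨zmultiples g, aux_isAddCyclic_zmultiples g⟩
        ⟨g, mem_zmultiples g⟩ := aux_transport φ' hg.symm g hgC (mem_zmultiples g)
    rw [h1, h2]
    exact congrFun (congrArg Subtype.val h) g
  have hsurj : Surjective Ψ := by
    rintro ⟨f, hf⟩
    choose ψ hψ using fun C : Idx => aux_hom hf C.1 C.2
    refine ⟨ψ, Subtype.ext (funext fun x => ?_)⟩
    exact hψ ⟨zmultiples x, aux_isAddCyclic_zmultiples x⟩ x (mem_zmultiples x) rfl
  let E1 : (∀ C : Idx, C.1 →+ QZ) ≃+ (Hmg 1 G QZ) := AddEquiv.ofBijective Ψ ⟨hinj, hsurj⟩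
  let E2 : (⨁ C : Idx, (C.1 →+ QZ)) ≃+ (∀ C : Idx, C.1 →+ QZ) :=
    { DFinsupp.equivFunOnFintype with
      map_add' := fun a b => rfl }
  exact ⟨(E1.symm.trans E2.symm).symm.symm⟩

end
end
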